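/- arXiv:1111.6388 — 7 statements merged into one kernel-verified Lean document; each statement's English description precedes it below -/
import Mathlib

section
/- Let A be a continuous linear map on ℝⁿ, let Z : ℝ → ℝ be continuous, and let F : ℝⁿ → ℝⁿ be twice continuously differentiable with F(0) = 0 and with DF and D²F bounded on ℝⁿ. For ε ∈ [0,1] let Φ_ε : [0,T] → ℝⁿ be the solution of Φ_ε'(t) = A Φ_ε(t) + ε Z(t) Φ_ε(t) + e^{−εZ(t)} F(e^{εZ(t)} Φ_ε(t)) with Φ_ε(0) = Φ⁰. Let Φ⁽ᵈ⁾ solve Φ⁽ᵈ⁾'(t) = A Φ⁽ᵈ⁾(t) + F(Φ⁽ᵈ⁾(t)), Φ⁽ᵈ⁾(0) = Φ⁰, and let Φ⁽¹⁾ solve the linear equation Φ⁽¹⁾'(t) = (A + DF(Φ⁽ᵈ⁾(t))) Φ⁽¹⁾(t) + Z(t) [Φ⁽ᵈ⁾(t) − F(Φ⁽ᵈ⁾(t)) + DF(Φ⁽ᵈ⁾(t)) Φ⁽ᵈ⁾(t)], Φ⁽¹⁾(0) = 0. Then for every T > 0 there is a constant C (depending on T, A, Z, F, Φ⁰ but not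 on ε) such that sup_{0 ≤ t ≤ T} ‖Φ_ε(t) − Φ⁽ᵈ⁾(t) − ε Φ⁽¹⁾(t)‖ ≤ C ε² for all ε ∈ [0,1]. -/
open Real Set

section Aux
variable {E : Type*} [NormedAddCommGroup E] [NormedSpace ℝ E]

/-- MVT Lipschitz bound for a map with globally bounded fderiv. -/
lemma aux_lip {f : E → E} (hf : ContDiff ℝ 2 f) {C : ℝ} (hC : ∀ x, ‖fderiv ℝ f x‖ ≤ C)
    (x y : E) : ‖f y - f x‖ ≤ C * ‖y - x‖ := by
  refine Convex.norm_image_sub_le_of_norm_fderiv_le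
    (fun w _ => (hf.differentiable (by norm_num)).differentiableAt) (fun w _ => hC w)
    convex_univ (mem_univ x) (mem_univ y)

/-- Lipschitz bound on the derivative. -/
lemma aux_lipD {f : E → E} (hf : ContDiff ℝ 2 f) {C : ℝ}
    (hC : ∀ x, ‖fderiv ℝ (fderiv ℝ f) x‖ ≤ C) (x y : E) :
    ‖fderiv ℝ f y - fderiv ℝ f x‖ ≤ C * ‖y - x‖ := by
  refine Convex.norm_image_sub_le_of_norm_fderiv_le
    (fun w _ => ?_) (fun w _ => hC w) convex_univ (mem_univ x) (mem_univ y)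
  exact ((hf.fderiv_right (m := 1) (by norm_num)).differentiable (by norm_num)).differentiableAt

/-- Second order Taylor bound. -/
lemma aux_taylor {f : E → E} (hf : ContDiff ℝ 2 f) {C : ℝ}
    (hC : ∀ x, ‖fderiv ℝ (fderiv ℝ f) x‖ ≤ C) (x y : E) :
    ‖f y - f x - fderiv ℝ f x (y - x)‖ ≤ C * ‖y - x‖ ^ 2 := by
  set g : E → E := fun w => f w - fderiv ℝ f x w with hg
  have hdiff : Differentiable ℝ f := hf.differentiable (by norm_num)
  have hgd : ∀ w, HasFDerivAt g (fderiv ℝ f w - fderiv ℝ f x) w := fun w =>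
    ((hdiff w).hasFDerivAt).sub ((fderiv ℝ f x).hasFDerivAt)
  have key : ‖g y - g x‖ ≤ (C * ‖y - x‖) * ‖y - x‖ := by
    refine Convex.norm_image_sub_le_of_norm_hasFDerivWithin_le
      (f' := fun w => fderiv ℝ f w - fderiv ℝ f x)
      (fun w _ => (hgd w).hasFDerivWithinAt) (fun w hw => ?_)
      (convex_closedBall x ‖y - x‖) (Metric.mem_closedBall_self (norm_nonneg _)) ?_
    · calc ‖fderiv ℝ f w - fderiv ℝ f x‖ ≤ C * ‖w - x‖ := aux_lipD hf hC x w
        _ ≤ C * ‖y - x‖ := by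
            have := Metric.mem_closedBall.1 hw
            rw [dist_eq_norm] at this
            have hC0 : 0 ≤ C := le_trans (norm_nonneg _) (hC 0)
            nlinarith
    · simp [Metric.mem_closedBall, dist_eq_norm]
  have : g y - g x = f y - f x - fderiv ℝ f x (y - x) := by
    simp [hg, map_sub]; abel
  rw [this] at key; nlinarith [key]

lemma aux_exp1 (u : ℝ) : |Real.exp u - 1| ≤ Real.exp |u| * |u| := by
  have h := Convex.norm_image_sub_le_of_norm_hasDerivWithin_le (f := Real.exp)
    (f' := Real.exp) (fun w _ => (Real.hasDerivAt_exp w).hasDerivWithinAt)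
    (C := Real.exp |u|) (fun w hw => ?_) (convex_Icc (-|u|) |u|)
    (by constructor <;> [linarith [abs_nonneg u]; exact abs_nonneg u] : (0:ℝ) ∈ Icc (-|u|) |u|)
    (by constructor <;> [exact neg_abs_le u; exact le_abs_self u] : u ∈ Icc (-|u|) |u|)
  · simpa [Real.exp_zero, Real.norm_eq_abs] using h
  · rw [Real.norm_eq_abs, abs_of_pos (Real.exp_pos w)]
    exact Real.exp_le_exp.2 hw.2

lemma aux_exp2 (u : ℝ) : |Real.exp u - 1 - u| ≤ Real.exp |u| * u ^ 2 := by
  have h := Convex.norm_image_sub_le_of_norm_hasDerivWithin_le (f := fun w => Real.exp w - w)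
    (f' := fun w => Real.exp w - 1)
    (fun w _ => ((Real.hasDerivAt_exp w).sub (hasDerivAt_id w)).hasDerivWithinAt)
    (C := Real.exp |u| * |u|) (fun w hw => ?_) (convex_Icc (-|u|) |u|)
    (by constructor <;> [linarith [abs_nonneg u]; exact abs_nonneg u] : (0:ℝ) ∈ Icc (-|u|) |u|)
    (by constructor <;> [exact neg_abs_le u; exact le_abs_self u] : u ∈ Icc (-|u|) |u|)
  · simp only [Real.exp_zero, Real.norm_eq_abs, sub_zero] at h
    calc |Real.exp u - 1 - u| = |Real.exp u - u - (Real.exp 0 - 0)| := by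
          rw [Real.exp_zero]; ring_nf
      _ ≤ Real.exp |u| * |u| * |u| := by simpa [Real.exp_zero] using h
      _ = Real.exp |u| * u ^ 2 := by rw [mul_assoc, abs_mul_abs_self]; ring
  · rw [Real.norm_eq_abs]
    calc |Real.exp w - 1| ≤ Real.exp |w| * |w| := aux_exp1 w
      _ ≤ Real.exp |u| * |u| := by
          have hw1 : |w| ≤ |u| := abs_le.2 ⟨hw.1, hw.2⟩
          have := Real.exp_le_exp.2 hw1
          nlinarith [abs_nonneg w, Real.exp_pos |w|]

lemma aux_ident (A Dx Dd : E →L[ℝ] E) (x d p Fx Fd Fe : E) (ε Zt e em : ℝ)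
    (he : em * e = 1) :
    (A x + (ε * Zt) • x + em • Fe) - (A d + Fd)
      - ε • (A p + Dd p + Zt • (d - Fd + Dd d))
    = A (x - d - ε • p) + (ε * Zt) • (x - d - ε • p) + (ε * (ε * Zt)) • p
      + Dd (x - d - ε • p)
      + em • (Fe - Fx - Dx ((e - 1) • x))
      + (em - 1 + ε * Zt) • (Fx - Dx x)
      + (ε * Zt) • ((Dx x - Fx) - (Dd d - Fd))
      + (Fx - Fd - Dd (x - d)) := by
  simp only [map_sub, map_smul]
  match_scalars <;> first
    | ring1
    | linear_combination he

end Aux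

set_option maxHeartbeats 2000000 in
/-- First-order asymptotic expansion in the noise intensity `ε` of the solution
`Φ ε` of the random evolutionary equation
`Φ' = A Φ + ε Z(t) Φ + e^{-εZ(t)} F(e^{εZ(t)} Φ)`, around the deterministic
solution `Φd` with first-order correction `Φ1`. -/
theorem approx_solution_first_order
    {n : ℕ} (A : EuclideanSpace ℝ (Fin n) →L[ℝ] EuclideanSpace ℝ (Fin n))
    (Z : ℝ → ℝ) (hZ : Continuous Z)
    (F : EuclideanSpace ℝ (Fin n) → EuclideanSpace ℝ (Fin n))
    (hF : ContDiff ℝ 2 F) (hF0 : F 0 = 0)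
    (hDF : ∃ C : ℝ, ∀ x, ‖fderiv ℝ F x‖ ≤ C)
    (hD2F : ∃ C : ℝ, ∀ x, ‖fderiv ℝ (fderiv ℝ F) x‖ ≤ C)
    (Φ0 : EuclideanSpace ℝ (Fin n))
    (T : ℝ) (hT : 0 < T)
    (Φ : ℝ → ℝ → EuclideanSpace ℝ (Fin n))
    (hΦinit : ∀ ε ∈ Set.Icc (0:ℝ) 1, Φ ε 0 = Φ0)
    (hΦ : ∀ ε ∈ Set.Icc (0:ℝ) 1, ∀ t ∈ Set.Icc (0:ℝ) T,
      HasDerivAt (Φ ε)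
        (A (Φ ε t) + (ε * Z t) • Φ ε t
          + Real.exp (-(ε * Z t)) • F (Real.exp (ε * Z t) • Φ ε t)) t)
    (Φd : ℝ → EuclideanSpace ℝ (Fin n))
    (hΦdinit : Φd 0 = Φ0)
    (hΦd : ∀ t ∈ Set.Icc (0:ℝ) T,
      HasDerivAt Φd (A (Φd t) + F (Φd t)) t)
    (Φ1 : ℝ → EuclideanSpace ℝ (Fin n))
    (hΦ1init : Φ1 0 = 0)
    (hΦ1 : ∀ t ∈ Set.Icc (0:ℝ) T,
      HasDerivAt Φ1
        (A (Φ1 t) + (fderiv ℝ F (Φd t)) (Φ1 t)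
          + Z t • (Φd t - F (Φd t) + (fderiv ℝ F (Φd t)) (Φd t))) t) :
    ∃ C : ℝ, ∀ ε ∈ Set.Icc (0:ℝ) 1, ∀ t ∈ Set.Icc (0:ℝ) T,
      ‖Φ ε t - Φd t - ε • Φ1 t‖ ≤ C * ε ^ 2 := by
  obtain ⟨C₁, hC₁⟩ := hDF
  obtain ⟨C₂, hC₂⟩ := hD2F
  have hC₁0 : 0 ≤ C₁ := le_trans (norm_nonneg _) (hC₁ 0)
  have hC₂0 : 0 ≤ C₂ := le_trans (norm_nonneg (fderiv ℝ (fderiv ℝ F) 0)) (hC₂ 0)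
  have hFlin : ∀ v : EuclideanSpace ℝ (Fin n), ‖F v‖ ≤ C₁ * ‖v‖ := fun v => by
    simpa [hF0] using aux_lip hF hC₁ 0 v
  -- bound on Z
  obtain ⟨MZ, hMZ⟩ := (isCompact_Icc (a := (0:ℝ)) (b := T)).exists_bound_of_continuousOn
    hZ.continuousOn
  have hMZ0 : 0 ≤ MZ := le_trans (norm_nonneg _) (hMZ 0 ⟨le_refl 0, hT.le⟩)
  have hZabs : ∀ s ∈ Icc (0:ℝ) T, |Z s| ≤ MZ := fun s hs => by
    simpa [Real.norm_eq_abs] using hMZ s hs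
  -- bounds on Φd, Φ1
  obtain ⟨Bd, hBd⟩ := (isCompact_Icc (a := (0:ℝ)) (b := T)).exists_bound_of_continuousOn
    (fun s hs => ((hΦd s hs).continuousAt.continuousWithinAt :
      ContinuousWithinAt Φd (Icc 0 T) s))
  have hBd0 : 0 ≤ Bd := le_trans (norm_nonneg _) (hBd 0 ⟨le_refl 0, hT.le⟩)
  obtain ⟨B1, hB1⟩ := (isCompact_Icc (a := (0:ℝ)) (b := T)).exists_bound_of_continuousOn
    (fun s hs => ((hΦ1 s hs).continuousAt.continuousWithinAt :
      ContinuousWithinAt Φ1 (Icc 0 T) s))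
  have hB10 : 0 ≤ B1 := le_trans (norm_nonneg _) (hB1 0 ⟨le_refl 0, hT.le⟩)
  -- a priori bound on Φ
  obtain ⟨B, hBdef⟩ : ∃ B : ℝ, B = ‖Φ0‖ * Real.exp ((‖A‖ + MZ + C₁) * T) := ⟨_, rfl⟩
  have hB0 : 0 ≤ B := by rw [hBdef]; positivity
  have hBB : ∀ ε ∈ Icc (0:ℝ) 1, ∀ t ∈ Icc (0:ℝ) T, ‖Φ ε t‖ ≤ B := by
    intro ε hε t ht
    have key := norm_le_gronwallBound_of_norm_deriv_right_le
      (f := Φ ε) (δ := ‖Φ0‖) (K := ‖A‖ + MZ + C₁) (ε := 0) (a := 0) (b := T)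
      (fun s hs => ((hΦ ε hε s hs).continuousAt).continuousWithinAt)
      (fun s hs => (hΦ ε hε s (Ico_subset_Icc_self hs)).hasDerivWithinAt)
      (le_of_eq (by rw [hΦinit ε hε])) ?_ t ht
    · rw [sub_zero, gronwallBound_ε0] at key
      rw [hBdef]
      refine key.trans (mul_le_mul_of_nonneg_left (Real.exp_le_exp.2 ?_) (norm_nonneg _))
      have hK0 : 0 ≤ ‖A‖ + MZ + C₁ := by positivity
      exact mul_le_mul_of_nonneg_left ht.2 hK0
    · intro s hs
      have hs' := Ico_subset_Icc_self hs
      set v := Φ ε s with hv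
      have h1 : ‖A v‖ ≤ ‖A‖ * ‖v‖ := A.le_opNorm v
      have h2 : ‖(ε * Z s) • v‖ ≤ MZ * ‖v‖ := by
        rw [norm_smul, Real.norm_eq_abs, abs_mul, abs_of_nonneg hε.1]
        have hzz := hZabs s hs'
        calc ε * |Z s| * ‖v‖ ≤ 1 * MZ * ‖v‖ :=
              mul_le_mul_of_nonneg_right
                (mul_le_mul hε.2 hzz (abs_nonneg _) zero_le_one) (norm_nonneg v)
          _ = MZ * ‖v‖ := by ring
      have hee : Real.exp (-(ε * Z s)) * Real.exp (ε * Z s) = 1 := by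
        rw [← Real.exp_add]; simp
      have h3 : ‖Real.exp (-(ε * Z s)) • F (Real.exp (ε * Z s) • v)‖ ≤ C₁ * ‖v‖ := by
        rw [norm_smul, Real.norm_eq_abs, abs_of_pos (Real.exp_pos _)]
        calc Real.exp (-(ε * Z s)) * ‖F (Real.exp (ε * Z s) • v)‖
            ≤ Real.exp (-(ε * Z s)) * (C₁ * ‖Real.exp (ε * Z s) • v‖) :=
              mul_le_mul_of_nonneg_left (hFlin _) (Real.exp_pos _).le
          _ = Real.exp (-(ε * Z s)) * (C₁ * (Real.exp (ε * Z s) * ‖v‖)) := by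
              rw [norm_smul, Real.norm_eq_abs, abs_of_pos (Real.exp_pos _)]
          _ = C₁ * ‖v‖ := by linear_combination (C₁ * ‖v‖) * hee
      calc ‖A v + (ε * Z s) • v + Real.exp (-(ε * Z s)) • F (Real.exp (ε * Z s) • v)‖
          ≤ ‖A v + (ε * Z s) • v‖ + ‖Real.exp (-(ε * Z s)) • F (Real.exp (ε * Z s) • v)‖ :=
            norm_add_le _ _
        _ ≤ (‖A v‖ + ‖(ε * Z s) • v‖) + ‖Real.exp (-(ε * Z s)) • F (Real.exp (ε * Z s) • v)‖ :=
            add_le_add_left (norm_add_le _ _) _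
        _ ≤ (‖A‖ + MZ + C₁) * ‖v‖ + 0 := by linarith
  -- constants for the main estimate
  obtain ⟨L6, hL6def⟩ : ∃ L : ℝ, L = 2 * C₁ + C₂ * Bd := ⟨_, rfl⟩
  have hL60 : 0 ≤ L6 := by
    rw [hL6def]; have := mul_nonneg hC₂0 hBd0; linarith
  obtain ⟨BR, hBRdef⟩ : ∃ b : ℝ, b = B + Bd + B1 := ⟨_, rfl⟩
  have hBR0 : 0 ≤ BR := by rw [hBRdef]; linarith
  obtain ⟨K, hKdef⟩ : ∃ k : ℝ,
      k = ‖A‖ + MZ + C₁ + MZ * L6 + C₂ * (BR + 2 * B1) + 1 := ⟨_, rfl⟩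
  have hK1 : 1 ≤ K := by
    rw [hKdef]
    have h1 : (0:ℝ) ≤ ‖A‖ := norm_nonneg _
    have h2 := mul_nonneg hMZ0 hL60
    have h3 : 0 ≤ C₂ * (BR + 2 * B1) := mul_nonneg hC₂0 (by linarith)
    linarith
  have hK0 : 0 < K := lt_of_lt_of_le one_pos hK1
  obtain ⟨c, hcdef⟩ : ∃ c : ℝ,
      c = MZ * B1 + Real.exp MZ * C₂ * (Real.exp MZ * MZ * B) ^ 2
        + Real.exp MZ * MZ ^ 2 * (2 * (C₁ * B)) + MZ * L6 * B1 + C₂ * B1 ^ 2 := ⟨_, rfl⟩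
  have hc0 : 0 ≤ c := by
    rw [hcdef]
    have h1 := mul_nonneg hMZ0 hB10
    have h2 : 0 ≤ Real.exp MZ * C₂ * (Real.exp MZ * MZ * B) ^ 2 :=
      mul_nonneg (mul_nonneg (Real.exp_pos _).le hC₂0) (sq_nonneg _)
    have h3 : 0 ≤ Real.exp MZ * MZ ^ 2 * (2 * (C₁ * B)) :=
      mul_nonneg (mul_nonneg (Real.exp_pos _).le (sq_nonneg _))
        (by have := mul_nonneg hC₁0 hB0; linarith)
    have h4 := mul_nonneg (mul_nonneg hMZ0 hL60) hB10
    have h5 := mul_nonneg hC₂0 (sq_nonneg B1)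
    linarith
  refine ⟨c * Real.exp (K * T), ?_⟩
  intro ε hε t ht
  have hfD : ∀ s ∈ Icc (0:ℝ) T,
      HasDerivAt (fun s => Φ ε s - Φd s - ε • Φ1 s)
        ((A (Φ ε s) + (ε * Z s) • Φ ε s
            + Real.exp (-(ε * Z s)) • F (Real.exp (ε * Z s) • Φ ε s))
          - (A (Φd s) + F (Φd s))
          - ε • (A (Φ1 s) + (fderiv ℝ F (Φd s)) (Φ1 s)
            + Z s • (Φd s - F (Φd s) + (fderiv ℝ F (Φd s)) (Φd s)))) s := fun s hs =>
    ((hΦ ε hε s hs).sub (hΦd s hs)).sub ((hΦ1 s hs).const_smul ε)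
  have key := norm_le_gronwallBound_of_norm_deriv_right_le
    (f := fun s => Φ ε s - Φd s - ε • Φ1 s) (δ := 0) (K := K) (ε := c * ε ^ 2)
    (a := 0) (b := T)
    (fun s hs => ((hfD s hs).continuousAt).continuousWithinAt)
    (fun s hs => (hfD s (Ico_subset_Icc_self hs)).hasDerivWithinAt)
    (le_of_eq (by simp [hΦinit ε hε, hΦdinit, hΦ1init])) ?_ t ht
  · simp only [sub_zero, gronwallBound_of_K_ne_0 hK0.ne', zero_mul, zero_add] at key
    have hcc : 0 ≤ c * ε ^ 2 := mul_nonneg hc0 (sq_nonneg ε)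
    refine key.trans ?_
    have h1 : c * ε ^ 2 / K ≤ c * ε ^ 2 := by
      rw [div_le_iff₀ hK0]; nlinarith
    have h3 : 0 ≤ Real.exp (K * t) - 1 := by
      nlinarith [Real.add_one_le_exp (K * t), mul_nonneg hK0.le ht.1]
    have h2 : Real.exp (K * t) - 1 ≤ Real.exp (K * T) := by
      have : Real.exp (K * t) ≤ Real.exp (K * T) :=
        Real.exp_le_exp.2 (mul_le_mul_of_nonneg_left ht.2 hK0.le)
      linarith
    calc c * ε ^ 2 / K * (Real.exp (K * t) - 1)
        ≤ c * ε ^ 2 * Real.exp (K * T) :=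
          mul_le_mul h1 h2 h3 hcc
      _ = c * Real.exp (K * T) * ε ^ 2 := by ring
  · -- the derivative bound
    intro s hs
    have hs' := Ico_subset_Icc_self hs
    have hee : Real.exp (-(ε * Z s)) * Real.exp (ε * Z s) = 1 := by
      rw [← Real.exp_add]; simp
    rw [aux_ident A (fderiv ℝ F (Φ ε s)) (fderiv ℝ F (Φd s)) (Φ ε s) (Φd s) (Φ1 s)
      (F (Φ ε s)) (F (Φd s)) (F (Real.exp (ε * Z s) • Φ ε s)) ε (Z s)
      (Real.exp (ε * Z s)) (Real.exp (-(ε * Z s))) hee]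
    set x := Φ ε s with hxdef
    set d := Φd s with hddef
    set p := Φ1 s with hpdef
    set R : EuclideanSpace ℝ (Fin n) := x - d - ε • p with hRdef
    set Dx := fderiv ℝ F x with hDxdef
    set Dd := fderiv ℝ F d with hDddef
    have hx : ‖x‖ ≤ B := hBB ε hε s hs'
    have hd : ‖d‖ ≤ Bd := hBd s hs'
    have hp : ‖p‖ ≤ B1 := hB1 s hs'
    have hZs : |Z s| ≤ MZ := hZabs s hs'
    have hε0 := hε.1
    have hε1 := hε.2
    have hz1 : |ε * Z s| ≤ ε * MZ := by
      rw [abs_mul, abs_of_nonneg hε0]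
      exact mul_le_mul_of_nonneg_left hZs hε0
    have hz2 : |ε * Z s| ≤ MZ := hz1.trans (by nlinarith)
    have hxd : ‖x - d‖ ≤ ‖R‖ + ε * B1 := by
      have hrw : x - d = R + ε • p := by rw [hRdef]; abel
      rw [hrw]
      refine (norm_add_le _ _).trans ?_
      rw [norm_smul, Real.norm_eq_abs, abs_of_nonneg hε0]
      have : ε * ‖p‖ ≤ ε * B1 := mul_le_mul_of_nonneg_left hp hε0
      linarith
    have hRle : ‖R‖ ≤ BR := by
      rw [hRdef, hBRdef]
      refine (norm_sub_le _ _).trans ?_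
      have h0 := norm_sub_le x d
      rw [norm_smul, Real.norm_eq_abs, abs_of_nonneg hε0]
      have he : ε * ‖p‖ ≤ 1 * B1 := mul_le_mul hε1 hp (norm_nonneg _) zero_le_one
      linarith
    -- term bounds
    have hT1 : ‖A R‖ ≤ ‖A‖ * ‖R‖ := A.le_opNorm R
    have hT2 : ‖(ε * Z s) • R‖ ≤ MZ * ‖R‖ := by
      rw [norm_smul, Real.norm_eq_abs]
      exact mul_le_mul_of_nonneg_right hz2 (norm_nonneg _)
    have hT3 : ‖(ε * (ε * Z s)) • p‖ ≤ MZ * B1 * ε ^ 2 := by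
      rw [norm_smul, Real.norm_eq_abs, abs_mul, abs_of_nonneg hε0]
      calc ε * |ε * Z s| * ‖p‖ ≤ ε * (ε * MZ) * B1 := by
            refine mul_le_mul (mul_le_mul_of_nonneg_left hz1 hε0) hp (norm_nonneg _) ?_
            exact mul_nonneg hε0 (mul_nonneg hε0 hMZ0)
        _ = MZ * B1 * ε ^ 2 := by ring
    have hT4 : ‖Dd R‖ ≤ C₁ * ‖R‖ :=
      ((Dd).le_opNorm R).trans (mul_le_mul_of_nonneg_right (hC₁ d) (norm_nonneg _))
    have hT5 : ‖Real.exp (-(ε * Z s)) •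
        (F (Real.exp (ε * Z s) • x) - F x - Dx ((Real.exp (ε * Z s) - 1) • x))‖
        ≤ Real.exp MZ * C₂ * (Real.exp MZ * MZ * B) ^ 2 * ε ^ 2 := by
      rw [norm_smul, Real.norm_eq_abs, abs_of_pos (Real.exp_pos _)]
      have he1 : Real.exp (-(ε * Z s)) ≤ Real.exp MZ :=
        Real.exp_le_exp.2 ((neg_le_abs _).trans hz2)
      have hsub : (Real.exp (ε * Z s) - 1) • x = Real.exp (ε * Z s) • x - x := by
        rw [sub_smul, one_smul]
      rw [hsub]
      have htay := aux_taylor hF hC₂ x (Real.exp (ε * Z s) • x)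
      have hnorm : ‖Real.exp (ε * Z s) • x - x‖ ≤ Real.exp MZ * MZ * B * ε := by
        rw [← hsub, norm_smul, Real.norm_eq_abs]
        have h1 := aux_exp1 (ε * Z s)
        have h2 : Real.exp |ε * Z s| ≤ Real.exp MZ := Real.exp_le_exp.2 hz2
        calc |Real.exp (ε * Z s) - 1| * ‖x‖
            ≤ (Real.exp |ε * Z s| * |ε * Z s|) * ‖x‖ :=
              mul_le_mul_of_nonneg_right h1 (norm_nonneg _)
          _ ≤ (Real.exp MZ * (ε * MZ)) * B := by
              refine mul_le_mul ?_ hx (norm_nonneg _) ?_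
              · exact mul_le_mul h2 hz1 (abs_nonneg _) (Real.exp_pos _).le
              · exact mul_nonneg (Real.exp_pos _).le (mul_nonneg hε0 hMZ0)
          _ = Real.exp MZ * MZ * B * ε := by ring
      have hnn : (0:ℝ) ≤ ‖Real.exp (ε * Z s) • x - x‖ := norm_nonneg _
      have hsq : ‖Real.exp (ε * Z s) • x - x‖ ^ 2 ≤ (Real.exp MZ * MZ * B * ε) ^ 2 :=
        pow_le_pow_left₀ hnn hnorm 2
      calc Real.exp (-(ε * Z s)) *
          ‖F (Real.exp (ε * Z s) • x) - F x - Dx (Real.exp (ε * Z s) • x - x)‖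
          ≤ Real.exp MZ * (C₂ * (Real.exp MZ * MZ * B * ε) ^ 2) := by
            refine mul_le_mul he1 (htay.trans ?_) (norm_nonneg _) (Real.exp_pos _).le
            exact mul_le_mul_of_nonneg_left hsq hC₂0
        _ = Real.exp MZ * C₂ * (Real.exp MZ * MZ * B) ^ 2 * ε ^ 2 := by ring
    have hT6 : ‖(Real.exp (-(ε * Z s)) - 1 + ε * Z s) • (F x - Dx x)‖
        ≤ Real.exp MZ * MZ ^ 2 * (2 * (C₁ * B)) * ε ^ 2 := by
      rw [norm_smul, Real.norm_eq_abs]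
      have h1 : |Real.exp (-(ε * Z s)) - 1 + ε * Z s| ≤ Real.exp MZ * (MZ ^ 2 * ε ^ 2) := by
        have h2 := aux_exp2 (-(ε * Z s))
        rw [abs_neg] at h2
        have h3 : Real.exp |ε * Z s| ≤ Real.exp MZ := Real.exp_le_exp.2 hz2
        have h4 : (-(ε * Z s)) ^ 2 = (ε * Z s) ^ 2 := by ring
        rw [h4] at h2
        have h5 : (ε * Z s) ^ 2 ≤ MZ ^ 2 * ε ^ 2 := by
          have h6 := mul_self_le_mul_self (abs_nonneg (ε * Z s)) hz1
          have h7 := sq_abs (ε * Z s)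
          nlinarith
        have hr : Real.exp (-(ε * Z s)) - 1 + ε * Z s
            = Real.exp (-(ε * Z s)) - 1 - (-(ε * Z s)) := by ring
        rw [hr]
        refine h2.trans ?_
        exact mul_le_mul h3 h5 (sq_nonneg _) (Real.exp_pos _).le
      have h6 : ‖F x - Dx x‖ ≤ 2 * (C₁ * B) := by
        refine (norm_sub_le _ _).trans ?_
        have ha := (hFlin x).trans (mul_le_mul_of_nonneg_left hx hC₁0)
        have hb := (Dx.le_opNorm x).trans
          ((mul_le_mul_of_nonneg_right (hC₁ x) (norm_nonneg _)).trans
            (mul_le_mul_of_nonneg_left hx hC₁0))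
        linarith
      calc |Real.exp (-(ε * Z s)) - 1 + ε * Z s| * ‖F x - Dx x‖
          ≤ (Real.exp MZ * (MZ ^ 2 * ε ^ 2)) * (2 * (C₁ * B)) := by
            refine mul_le_mul h1 h6 (norm_nonneg _) ?_
            exact mul_nonneg (Real.exp_pos _).le (mul_nonneg (sq_nonneg _) (sq_nonneg _))
        _ = Real.exp MZ * MZ ^ 2 * (2 * (C₁ * B)) * ε ^ 2 := by ring
    have hT7 : ‖(ε * Z s) • ((Dx x - F x) - (Dd d - F d))‖
        ≤ MZ * L6 * ‖R‖ + MZ * L6 * B1 * ε ^ 2 := by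
      rw [norm_smul, Real.norm_eq_abs]
      have hinner : ‖(Dx x - F x) - (Dd d - F d)‖ ≤ L6 * (‖R‖ + ε * B1) := by
        have hr : (Dx x - F x) - (Dd d - F d) = (Dx x - Dd d) - (F x - F d) := by abel
        rw [hr]
        refine (norm_sub_le _ _).trans ?_
        have h1 : ‖Dx x - Dd d‖ ≤ C₁ * ‖x - d‖ + C₂ * ‖x - d‖ * Bd := by
          have hsplit : Dx x - Dd d = Dx (x - d) + (Dx - Dd) d := by
            simp only [map_sub, ContinuousLinearMap.sub_apply]; abel
          rw [hsplit]
          refine (norm_add_le _ _).trans ?_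
          have ha := (Dx.le_opNorm (x - d)).trans
            (mul_le_mul_of_nonneg_right (hC₁ x) (norm_nonneg _))
          have hb := ((Dx - Dd).le_opNorm d).trans
            (mul_le_mul_of_nonneg_right (aux_lipD hF hC₂ d x) (norm_nonneg _))
          have hb2 : C₂ * ‖x - d‖ * ‖d‖ ≤ C₂ * ‖x - d‖ * Bd :=
            mul_le_mul_of_nonneg_left hd (mul_nonneg hC₂0 (norm_nonneg _))
          linarith
        have h2 : ‖F x - F d‖ ≤ C₁ * ‖x - d‖ := aux_lip hF hC₁ d x
        have hL6nn : 0 ≤ 2 * C₁ + C₂ * Bd := by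
          have := mul_nonneg hC₂0 hBd0; linarith
        have h3 : (2 * C₁ + C₂ * Bd) * ‖x - d‖ ≤ (2 * C₁ + C₂ * Bd) * (‖R‖ + ε * B1) :=
          mul_le_mul_of_nonneg_left hxd hL6nn
        rw [hL6def]
        nlinarith
      calc |ε * Z s| * ‖(Dx x - F x) - (Dd d - F d)‖
          ≤ (ε * MZ) * (L6 * (‖R‖ + ε * B1)) :=
            mul_le_mul hz1 hinner (norm_nonneg _) (mul_nonneg hε0 hMZ0)
        _ ≤ MZ * L6 * ‖R‖ + MZ * L6 * B1 * ε ^ 2 := by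
            nlinarith [mul_nonneg (mul_nonneg hMZ0 hL60) (norm_nonneg R)]
    have hT8 : ‖F x - F d - Dd (x - d)‖
        ≤ C₂ * (BR + 2 * B1) * ‖R‖ + C₂ * B1 ^ 2 * ε ^ 2 := by
      have htay := aux_taylor hF hC₂ d x
      have h1 : ‖x - d‖ ^ 2 ≤ (BR + 2 * B1) * ‖R‖ + B1 ^ 2 * ε ^ 2 := by
        have e1 : ‖x - d‖ * ‖x - d‖ ≤ (‖R‖ + ε * B1) * (‖R‖ + ε * B1) :=
          mul_self_le_mul_self (norm_nonneg _) hxd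
        have e2 : ‖R‖ * ‖R‖ ≤ BR * ‖R‖ := mul_le_mul_of_nonneg_right hRle (norm_nonneg _)
        have e3 : ε * B1 * ‖R‖ ≤ B1 * ‖R‖ := by
          nlinarith [mul_nonneg hB10 (norm_nonneg R)]
        nlinarith [mul_nonneg hε0 hB10, sq_nonneg ε, mul_nonneg hB10 hB10]
      calc ‖F x - F d - Dd (x - d)‖ ≤ C₂ * ‖x - d‖ ^ 2 := htay
        _ ≤ C₂ * ((BR + 2 * B1) * ‖R‖ + B1 ^ 2 * ε ^ 2) :=
            mul_le_mul_of_nonneg_left h1 hC₂0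
        _ = C₂ * (BR + 2 * B1) * ‖R‖ + C₂ * B1 ^ 2 * ε ^ 2 := by ring
    -- combine
    calc ‖A R + (ε * Z s) • R + (ε * (ε * Z s)) • p + Dd R
        + Real.exp (-(ε * Z s)) •
            (F (Real.exp (ε * Z s) • x) - F x - Dx ((Real.exp (ε * Z s) - 1) • x))
        + (Real.exp (-(ε * Z s)) - 1 + ε * Z s) • (F x - Dx x)
        + (ε * Z s) • ((Dx x - F x) - (Dd d - F d))
        + (F x - F d - Dd (x - d))‖
        ≤ ‖A R‖ + ‖(ε * Z s) • R‖ + ‖(ε * (ε * Z s)) • p‖ + ‖Dd R‖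
          + ‖Real.exp (-(ε * Z s)) •
              (F (Real.exp (ε * Z s) • x) - F x - Dx ((Real.exp (ε * Z s) - 1) • x))‖
          + ‖(Real.exp (-(ε * Z s)) - 1 + ε * Z s) • (F x - Dx x)‖
          + ‖(ε * Z s) • ((Dx x - F x) - (Dd d - F d))‖
          + ‖F x - F d - Dd (x - d)‖ := by
            refine (norm_add_le _ _).trans (add_le_add_left ?_ _)
            refine (norm_add_le _ _).trans (add_le_add_left ?_ _)
            refine (norm_add_le _ _).trans (add_le_add_left ?_ _)
            refine (norm_add_le _ _).trans (add_le_add_left ?_ _)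
            refine (norm_add_le _ _).trans (add_le_add_left ?_ _)
            refine (norm_add_le _ _).trans (add_le_add_left ?_ _)
            exact norm_add_le _ _
      _ ≤ K * ‖R‖ + c * ε ^ 2 := by
            rw [hKdef, hcdef]
            linarith [norm_nonneg R]
end

section
/- Let A be a continuous linear map on ℝⁿ, Z : ℝ → ℝ continuous, and F : ℝⁿ → ℝⁿ twice continuously differentiable with F(0) = 0 and with DF and D²F bounded. For ε ∈ [0,1] let Φ_ε solve Φ_ε' = AΦ_ε + εZ(t)Φ_ε + e^{−εZ(t)}F(e^{εZ(t)}Φ_ε), Φ_ε(0) = Φ⁰, and let ψ_ε solve ψ_ε' = Aψ_ε + εZ(t)ψ_ε + e^{−εZ(t)}[F(e^{εZ(t)}(ψ_ε + Φ_ε)) − F(e^{εZ(t)}Φ_ε)], with initial value ψ_ε(0) = ψ₀ + ε ψ₁ for fixed ψ₀, ψ₁ ∈ ℝⁿ. Let Φ⁽ᵈ⁾, Φ⁽¹⁾ be as in the zeroth and first-order equations for Φ (Φ⁽ᵈ⁾' = AΦ⁽ᵈ⁾ + F(Φ⁽ᵈ⁾), Φ⁽ᵈ⁾(0)=Φ⁰;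 Φ⁽¹⁾' = (A + DF(Φ⁽ᵈ⁾))Φ⁽¹⁾ + Z(t)[Φ⁽ᵈ⁾ − F(Φ⁽ᵈ⁾) + DF(Φ⁽ᵈ⁾)Φ⁽ᵈ⁾], Φ⁽¹⁾(0)=0). Let ψ⁽ᵈ⁾ solve ψ⁽ᵈ⁾' = Aψ⁽ᵈ⁾ + F(ψ⁽ᵈ⁾ + Φ⁽ᵈ⁾) − F(Φ⁽ᵈ⁾), ψ⁽ᵈ⁾(0) = ψ₀, and let ψ⁽¹⁾ solve ψ⁽¹⁾' = (A + DF(ψ⁽ᵈ⁾ + Φ⁽ᵈ⁾))ψ⁽¹⁾ + λ̃(t), ψ⁽¹⁾(0) = ψ₁, where λ̃(t) = Z(t)ψ⁽ᵈ⁾(t) + Z(t)[DF(ψ⁽ᵈ⁾(t)+Φ⁽ᵈ⁾(t))(ψ⁽ᵈ⁾(t)+Φ⁽ᵈ⁾(t)) − F(ψ⁽ᵈ⁾(t)+Φ⁽ᵈ⁾(t))] + DF(ψ⁽ᵈ⁾(t)+Φ⁽ᵈ⁾(t))Φ⁽¹⁾(t) − Z(t)[DF(Φ⁽ᵈ⁾(t))Φ⁽ᵈ⁾(t)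 − F(Φ⁽ᵈ⁾(t))] − DF(Φ⁽ᵈ⁾(t))Φ⁽¹⁾(t). Then for every T > 0 there is a constant C such that sup_{0 ≤ t ≤ T} ‖ψ_ε(t) − ψ⁽ᵈ⁾(t) − ε ψ⁽¹⁾(t)‖ ≤ C ε² for all ε ∈ [0,1]. -/
open Set

lemma my_exp_sub_one_le {y : ℝ} (hy : 0 ≤ y) : Real.exp y - 1 ≤ y * Real.exp y := by
  have h := Real.add_one_le_exp (-y)
  rw [Real.exp_neg] at h
  have hp := Real.exp_pos y
  have h2 := mul_le_mul_of_nonneg_right h hp.le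
  rw [inv_mul_cancel₀ hp.ne'] at h2
  nlinarith

lemma my_gronwallBound_le {δ K η x X : ℝ} (hδ : 0 ≤ δ) (hK : 0 ≤ K) (hη : 0 ≤ η)
    (hx : 0 ≤ x) (hxX : x ≤ X) :
    gronwallBound δ K η x ≤ (δ + η * X) * Real.exp (K * X) := by
  have hXpos : 0 ≤ X := hx.trans hxX
  rcases eq_or_lt_of_le hK with hK0 | hKpos
  · rw [← hK0, gronwallBound_K0]
    have h1 : (1:ℝ) ≤ Real.exp (0 * X) := by simp
    simp only
    nlinarith [mul_le_mul_of_nonneg_left h1 (by positivity : (0:ℝ) ≤ δ + η * X)]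
  · rw [gronwallBound_of_K_ne_0 hKpos.ne']
    have h1 : Real.exp (K * x) ≤ Real.exp (K * X) := Real.exp_le_exp.2 (by nlinarith)
    have h2 := my_exp_sub_one_le (y := K * x) (by positivity)
    have h3 : η / K * (Real.exp (K * x) - 1) ≤ η * x * Real.exp (K * x) := by
      rw [div_mul_eq_mul_div, div_le_iff₀ hKpos]
      nlinarith [Real.exp_pos (K * x)]
    have h4 : η * x * Real.exp (K * x) ≤ η * X * Real.exp (K * X) := by
      have := mul_le_mul hxX h1 (Real.exp_pos _).le hXpos
      nlinarith [mul_le_mul_of_nonneg_left this hη]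
    nlinarith [Real.exp_pos (K * X)]

lemma my_exp_lip {M s t : ℝ} (hs : |s| ≤ M) (ht : |t| ≤ M) :
    |Real.exp s - Real.exp t| ≤ Real.exp M * |s - t| := by
  rw [abs_le] at hs ht
  have := Convex.norm_image_sub_le_of_norm_deriv_le (f := Real.exp) (s := Icc (-M) M)
    (fun x _ => Real.differentiableAt_exp)
    (fun x hx => by
      rw [Real.deriv_exp]
      calc ‖Real.exp x‖ = Real.exp x := Real.norm_eq_abs _ ▸ abs_of_pos (Real.exp_pos x)
      _ ≤ Real.exp M := Real.exp_le_exp.2 hx.2)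
    (convex_Icc _ _) (mem_Icc.2 ht) (mem_Icc.2 hs)
  simpa [Real.norm_eq_abs] using this


variable {E : Type*} [NormedAddCommGroup E] [NormedSpace ℝ E]

section Fest
variable {F : E → E} {L M2 : ℝ}

lemma my_lipF (hF : ContDiff ℝ 2 F) (hL : ∀ z, ‖fderiv ℝ F z‖ ≤ L) (x y : E) :
    ‖F x - F y‖ ≤ L * ‖x - y‖ :=
  convex_univ.norm_image_sub_le_of_norm_fderiv_le
    (fun z _ => hF.differentiable two_ne_zero z) (fun z _ => hL z) trivial trivial

lemma my_normF (hF : ContDiff ℝ 2 F) (hF0 : F 0 = 0)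
    (hL : ∀ z, ‖fderiv ℝ F z‖ ≤ L) (x : E) : ‖F x‖ ≤ L * ‖x‖ := by
  simpa [hF0] using my_lipF hF hL x 0

lemma my_lipDF (hF : ContDiff ℝ 2 F) (hM2 : ∀ z, ‖fderiv ℝ (fderiv ℝ F) z‖ ≤ M2) (x y : E) :
    ‖fderiv ℝ F x - fderiv ℝ F y‖ ≤ M2 * ‖x - y‖ :=
  convex_univ.norm_image_sub_le_of_norm_fderiv_le
    (fun z _ => (hF.fderiv_right (m := 1) (by norm_num)).differentiable one_ne_zero z)
    (fun z _ => hM2 z) trivial trivial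

lemma my_taylorF (hF : ContDiff ℝ 2 F) (hM2 : ∀ z, ‖fderiv ℝ (fderiv ℝ F) z‖ ≤ M2) (x y : E) :
    ‖F y - F x - (fderiv ℝ F x) (y - x)‖ ≤ M2 * ‖y - x‖ * ‖y - x‖ := by
  have hM2nn : 0 ≤ M2 := (norm_nonneg _).trans (hM2 0)
  have := (convex_closedBall x ‖y - x‖).norm_image_sub_le_of_norm_fderiv_le'
    (φ := fderiv ℝ F x) (C := M2 * ‖y - x‖)
    (fun z _ => hF.differentiable two_ne_zero z)
    (fun z hz => by
      refine (my_lipDF hF hM2 z x).trans ?_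
      have : ‖z - x‖ ≤ ‖y - x‖ := by simpa [dist_eq_norm] using hz
      nlinarith)
    (Metric.mem_closedBall_self (norm_nonneg _))
    (by rw [Metric.mem_closedBall, dist_eq_norm])
  exact this

lemma my_h_bound (hF : ContDiff ℝ 2 F) (hF0 : F 0 = 0)
    (hL : ∀ z, ‖fderiv ℝ F z‖ ≤ L) (x : E) :
    ‖(fderiv ℝ F x) x - F x‖ ≤ 2 * L * ‖x‖ := by
  have h1 : ‖(fderiv ℝ F x) x‖ ≤ L * ‖x‖ :=
    ((fderiv ℝ F x).le_opNorm x).trans (by nlinarith [hL x, norm_nonneg x])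
  have h2 := my_normF hF hF0 hL x
  calc ‖(fderiv ℝ F x) x - F x‖ ≤ ‖(fderiv ℝ F x) x‖ + ‖F x‖ := norm_sub_le _ _
  _ ≤ 2 * L * ‖x‖ := by linarith

lemma my_h_lip (hF : ContDiff ℝ 2 F) (hM2 : ∀ z, ‖fderiv ℝ (fderiv ℝ F) z‖ ≤ M2) (x y : E) :
    ‖((fderiv ℝ F x) x - F x) - ((fderiv ℝ F y) y - F y)‖
      ≤ M2 * ‖x - y‖ * ‖y‖ + M2 * ‖y - x‖ * ‖y - x‖ := by
  have key : ((fderiv ℝ F x) x - F x) - ((fderiv ℝ F y) y - F y)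
      = (fderiv ℝ F x - fderiv ℝ F y) y + (F y - F x - (fderiv ℝ F x) (y - x)) := by
    simp only [ContinuousLinearMap.sub_apply, map_sub]
    abel
  rw [key]
  have h1 : ‖(fderiv ℝ F x - fderiv ℝ F y) y‖ ≤ M2 * ‖x - y‖ * ‖y‖ := by
    refine ((fderiv ℝ F x - fderiv ℝ F y).le_opNorm y).trans ?_
    nlinarith [my_lipDF hF hM2 x y, norm_nonneg y,
      norm_nonneg (fderiv ℝ F x - fderiv ℝ F y)]
  have h2 := my_taylorF hF hM2 x y
  calc _ ≤ ‖(fderiv ℝ F x - fderiv ℝ F y) y‖ + ‖F y - F x - (fderiv ℝ F x) (y - x)‖ :=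
    norm_add_le _ _
  _ ≤ _ := by linarith

end Fest

noncomputable def myPhiD (F : E → E) (x : E) (s : ℝ) : E :=
  Real.exp (-s) • ((fderiv ℝ F (Real.exp s • x)) (Real.exp s • x) - F (Real.exp s • x))

lemma myPhiD_zero (F : E → E) (x : E) : myPhiD F x 0 = (fderiv ℝ F x) x - F x := by
  simp [myPhiD]

lemma myPhiD_hasDerivAt {F : E → E} (hF : ContDiff ℝ 2 F) (x : E) (s : ℝ) :
    HasDerivAt (fun s : ℝ => Real.exp (-s) • F (Real.exp s • x)) (myPhiD F x s) s := by
  have h1 : HasDerivAt (fun s : ℝ => Real.exp s • x) (Real.exp s • x) s :=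
    (Real.hasDerivAt_exp s).smul_const x
  have h2 : HasDerivAt (fun s : ℝ => F (Real.exp s • x))
      ((fderiv ℝ F (Real.exp s • x)) (Real.exp s • x)) s :=
    (hF.differentiable two_ne_zero (Real.exp s • x)).hasFDerivAt.comp_hasDerivAt s h1
  have h3 : HasDerivAt (fun s : ℝ => Real.exp (-s)) (-Real.exp (-s)) s := by
    simpa [Function.comp_def] using (Real.hasDerivAt_exp (-s)).comp s (hasDerivAt_neg s)
  have := h3.smul h2
  convert this using 1
  · rfl
  rw [myPhiD, smul_sub]
  module

lemma myPhiD_norm {F : E → E} {L : ℝ} (hF : ContDiff ℝ 2 F) (hF0 : F 0 = 0)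
    (hL : ∀ z, ‖fderiv ℝ F z‖ ≤ L) (x : E) (s : ℝ) :
    ‖myPhiD F x s‖ ≤ 2 * L * ‖x‖ := by
  have h1 : ‖(fderiv ℝ F (Real.exp s • x)) (Real.exp s • x) - F (Real.exp s • x)‖
      ≤ 2 * L * (Real.exp s * ‖x‖) := by
    simpa [norm_smul, Real.abs_exp] using
      my_h_bound hF hF0 hL (Real.exp s • x)
  rw [myPhiD, norm_smul, Real.norm_eq_abs, Real.abs_exp]
  calc Real.exp (-s) * ‖(fderiv ℝ F (Real.exp s • x)) (Real.exp s • x) - F (Real.exp s • x)‖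
      ≤ Real.exp (-s) * (2 * L * (Real.exp s * ‖x‖)) := by
        exact mul_le_mul_of_nonneg_left h1 (Real.exp_pos _).le
  _ = 2 * L * ‖x‖ := by
      rw [show Real.exp (-s) * (2 * L * (Real.exp s * ‖x‖))
          = (Real.exp (-s) * Real.exp s) * (2 * L * ‖x‖) by ring, ← Real.exp_add]
      simp

lemma myPhiD_lip {F : E → E} {L M2 : ℝ} (hF : ContDiff ℝ 2 F) (hF0 : F 0 = 0)
    (hL : ∀ z, ‖fderiv ℝ F z‖ ≤ L) (hM2 : ∀ z, ‖fderiv ℝ (fderiv ℝ F) z‖ ≤ M2)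
    {Zb : ℝ} (hZb : 0 ≤ Zb) (x : E) {s s' : ℝ} (hs : |s| ≤ Zb) (hs' : |s'| ≤ Zb) :
    ‖myPhiD F x s - myPhiD F x s'‖
      ≤ (2 * L * Real.exp Zb ^ 2 * ‖x‖ + 3 * M2 * Real.exp Zb ^ 3 * ‖x‖ ^ 2) * |s - s'| := by
  set u := Real.exp s • x with hu_def
  set v := Real.exp s' • x with hv_def
  set hu := (fderiv ℝ F u) u - F u with hhu_def
  set hv := (fderiv ℝ F v) v - F v with hhv_def
  have hLnn : 0 ≤ L := (norm_nonneg _).trans (hL 0)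
  have hM2nn : 0 ≤ M2 := (norm_nonneg _).trans (hM2 0)
  have hE1 : (0:ℝ) < Real.exp Zb := Real.exp_pos _
  have hes : Real.exp s ≤ Real.exp Zb := Real.exp_le_exp.2 (le_of_abs_le hs)
  have hes' : Real.exp s' ≤ Real.exp Zb := Real.exp_le_exp.2 (le_of_abs_le hs')
  have hens : Real.exp (-s) ≤ Real.exp Zb := Real.exp_le_exp.2 (neg_le.2 (neg_le_of_abs_le hs))
  have hens' : Real.exp (-s') ≤ Real.exp Zb := Real.exp_le_exp.2 (neg_le.2 (neg_le_of_abs_le hs'))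
  have key : myPhiD F x s - myPhiD F x s'
      = (Real.exp (-s) - Real.exp (-s')) • hu + Real.exp (-s') • (hu - hv) := by
    rw [myPhiD, myPhiD, ← hu_def, ← hv_def, ← hhu_def, ← hhv_def]
    module
  have hexpneg : |Real.exp (-s) - Real.exp (-s')| ≤ Real.exp Zb * |s - s'| := by
    have := my_exp_lip (M := Zb) (s := -s) (t := -s') (by rwa [abs_neg]) (by rwa [abs_neg])
    calc |Real.exp (-s) - Real.exp (-s')| ≤ Real.exp Zb * |(-s) - (-s')| := this
    _ = Real.exp Zb * |s - s'| := by rw [show (-s) - (-s') = -(s - s') by ring, abs_neg]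
  have hexp : |Real.exp s - Real.exp s'| ≤ Real.exp Zb * |s - s'| := my_exp_lip hs hs'
  have hnu : ‖u‖ ≤ Real.exp Zb * ‖x‖ := by
    rw [hu_def, norm_smul, Real.norm_eq_abs, Real.abs_exp]
    exact mul_le_mul_of_nonneg_right hes (norm_nonneg x)
  have hnv : ‖v‖ ≤ Real.exp Zb * ‖x‖ := by
    rw [hv_def, norm_smul, Real.norm_eq_abs, Real.abs_exp]
    exact mul_le_mul_of_nonneg_right hes' (norm_nonneg x)
  have huv : ‖u - v‖ ≤ Real.exp Zb * |s - s'| * ‖x‖ := by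
    rw [hu_def, hv_def, ← sub_smul, norm_smul, Real.norm_eq_abs]
    exact mul_le_mul_of_nonneg_right hexp (norm_nonneg x)
  have hvu : ‖v - u‖ ≤ Real.exp Zb * |s - s'| * ‖x‖ := by
    rw [← norm_neg, neg_sub]; exact huv
  have hhu_norm : ‖hu‖ ≤ 2 * L * (Real.exp Zb * ‖x‖) := by
    refine (my_h_bound hF hF0 hL u).trans ?_
    nlinarith [norm_nonneg u]
  have hvu2 : ‖v - u‖ ≤ 2 * (Real.exp Zb * ‖x‖) := by
    refine (norm_sub_le _ _).trans ?_
    nlinarith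
  have hlip : ‖hu - hv‖ ≤ 3 * M2 * Real.exp Zb ^ 2 * ‖x‖ ^ 2 * |s - s'| := by
    refine (my_h_lip hF hM2 u v).trans ?_
    have h1 := mul_le_mul_of_nonneg_left (mul_le_mul huv hnv (norm_nonneg _) (by positivity)) hM2nn
    have h2 := mul_le_mul_of_nonneg_left (mul_le_mul hvu hvu2 (norm_nonneg _) (by positivity)) hM2nn
    have h3 : M2 * (‖u - v‖ * ‖v‖) + M2 * (‖v - u‖ * ‖v - u‖)
        ≤ 3 * M2 * Real.exp Zb ^ 2 * ‖x‖ ^ 2 * |s - s'| := by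
      refine (add_le_add h1 h2).trans_eq ?_
      ring
    linarith
  calc ‖myPhiD F x s - myPhiD F x s'‖
      ≤ ‖(Real.exp (-s) - Real.exp (-s')) • hu‖ + ‖Real.exp (-s') • (hu - hv)‖ := by
        rw [key]; exact norm_add_le _ _
  _ = |Real.exp (-s) - Real.exp (-s')| * ‖hu‖ + Real.exp (-s') * ‖hu - hv‖ := by
        rw [norm_smul, norm_smul, Real.norm_eq_abs, Real.norm_eq_abs, Real.abs_exp]
  _ ≤ (Real.exp Zb * |s - s'|) * (2 * L * (Real.exp Zb * ‖x‖))
        + Real.exp Zb * (3 * M2 * Real.exp Zb ^ 2 * ‖x‖ ^ 2 * |s - s'|) := by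
        exact add_le_add
          (mul_le_mul hexpneg hhu_norm (norm_nonneg _) (by positivity))
          (mul_le_mul hens' hlip (norm_nonneg _) hE1.le)
  _ = (2 * L * Real.exp Zb ^ 2 * ‖x‖ + 3 * M2 * Real.exp Zb ^ 3 * ‖x‖ ^ 2) * |s - s'| := by
        ring

lemma myPhiD_taylor1 {F : E → E} {L : ℝ} (hF : ContDiff ℝ 2 F) (hF0 : F 0 = 0)
    (hL : ∀ z, ‖fderiv ℝ F z‖ ≤ L) (x : E) (a : ℝ) :
    ‖Real.exp (-a) • F (Real.exp a • x) - F x‖ ≤ 2 * L * ‖x‖ * |a| := by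
  have hg : ∀ z ∈ Icc (-|a|) |a|,
      HasDerivWithinAt (fun s : ℝ => Real.exp (-s) • F (Real.exp s • x)) (myPhiD F x z)
        (Icc (-|a|) |a|) z :=
    fun z _ => (myPhiD_hasDerivAt hF x z).hasDerivWithinAt
  have h0 : (0:ℝ) ∈ Icc (-|a|) |a| := by
    constructor <;> simp [abs_nonneg a, neg_nonpos.2 (abs_nonneg a)]
  have ha : a ∈ Icc (-|a|) |a| := ⟨neg_abs_le a, le_abs_self a⟩
  have := Convex.norm_image_sub_le_of_norm_hasDerivWithin_le (C := 2 * L * ‖x‖) hg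
    (fun z _ => myPhiD_norm hF hF0 hL x z) (convex_Icc _ _) h0 ha
  simpa [Real.norm_eq_abs] using this

lemma myPhiD_taylor2 {F : E → E} {L M2 : ℝ} (hF : ContDiff ℝ 2 F) (hF0 : F 0 = 0)
    (hL : ∀ z, ‖fderiv ℝ F z‖ ≤ L) (hM2 : ∀ z, ‖fderiv ℝ (fderiv ℝ F) z‖ ≤ M2)
    {Zb : ℝ} (hZb : 0 ≤ Zb) (x : E) {a : ℝ} (ha : |a| ≤ Zb) :
    ‖Real.exp (-a) • F (Real.exp a • x) - F x - a • ((fderiv ℝ F x) x - F x)‖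
      ≤ (2 * L * Real.exp Zb ^ 2 * ‖x‖ + 3 * M2 * Real.exp Zb ^ 3 * ‖x‖ ^ 2) * (|a| * |a|) := by
  set Kc := 2 * L * Real.exp Zb ^ 2 * ‖x‖ + 3 * M2 * Real.exp Zb ^ 3 * ‖x‖ ^ 2 with hKc
  have hLnn : 0 ≤ L := (norm_nonneg _).trans (hL 0)
  have hM2nn : 0 ≤ M2 := (norm_nonneg _).trans (hM2 0)
  have hKcnn : 0 ≤ Kc := by positivity
  set g : ℝ → E := fun s => Real.exp (-s) • F (Real.exp s • x) - s • myPhiD F x 0 with hg_def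
  have hg : ∀ z ∈ Icc (-|a|) |a|,
      HasDerivWithinAt g (myPhiD F x z - myPhiD F x 0) (Icc (-|a|) |a|) z := by
    intro z _
    have h1 : HasDerivAt (fun s : ℝ => s • myPhiD F x 0) (myPhiD F x 0) z := by
      simpa using (hasDerivAt_id z).smul_const (myPhiD F x 0)
    exact ((myPhiD_hasDerivAt hF x z).sub h1).hasDerivWithinAt
  have hbound : ∀ z ∈ Icc (-|a|) |a|, ‖myPhiD F x z - myPhiD F x 0‖ ≤ Kc * |a| := by
    intro z hz
    have hzb : |z| ≤ Zb := by
      rw [abs_le]; exact ⟨le_trans (neg_le_neg ha) hz.1, hz.2.trans ha⟩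
    have := myPhiD_lip hF hF0 hL hM2 hZb x hzb (s' := 0) (by simpa using hZb)
    simp only [sub_zero] at this
    refine this.trans ?_
    have : |z| ≤ |a| := abs_le.2 ⟨hz.1, hz.2⟩
    exact mul_le_mul_of_nonneg_left this hKcnn
  have h0 : (0:ℝ) ∈ Icc (-|a|) |a| := by
    constructor <;> simp [abs_nonneg a, neg_nonpos.2 (abs_nonneg a)]
  have hamem : a ∈ Icc (-|a|) |a| := ⟨neg_abs_le a, le_abs_self a⟩
  have := Convex.norm_image_sub_le_of_norm_hasDerivWithin_le (C := Kc * |a|) hg hbound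
    (convex_Icc _ _) h0 hamem
  have hga : g a - g 0 = Real.exp (-a) • F (Real.exp a • x) - F x - a • ((fderiv ℝ F x) x - F x) := by
    rw [hg_def]
    simp [myPhiD_zero]
    abel
  rw [hga] at this
  simpa [Real.norm_eq_abs, mul_assoc] using this
section Main

open Set

variable {E : Type*} [NormedAddCommGroup E] [NormedSpace ℝ E]

set_option maxHeartbeats 2000000 in
lemma abstract_expansion
    (A : E →L[ℝ] E) (Z : ℝ → ℝ) (hZ : Continuous Z)
    (F : E → E) (hF : ContDiff ℝ 2 F) (hF0 : F 0 = 0)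
    {L M2 : ℝ} (hL : ∀ z, ‖fderiv ℝ F z‖ ≤ L) (hM2 : ∀ z, ‖fderiv ℝ (fderiv ℝ F) z‖ ≤ M2)
    (x0 x1i : E) (T : ℝ) (hT : 0 < T)
    (x : ℝ → ℝ → E)
    (hxinit : ∀ ε ∈ Icc (0:ℝ) 1, x ε 0 = x0 + ε • x1i)
    (hx : ∀ ε ∈ Icc (0:ℝ) 1, ∀ t ∈ Icc (0:ℝ) T,
      HasDerivAt (x ε) (A (x ε t) + (ε * Z t) • x ε t
        + Real.exp (-(ε * Z t)) • F (Real.exp (ε * Z t) • x ε t)) t)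
    (xd : ℝ → E) (hxdinit : xd 0 = x0)
    (hxd : ∀ t ∈ Icc (0:ℝ) T, HasDerivAt xd (A (xd t) + F (xd t)) t)
    (x1 : ℝ → E) (hx1init : x1 0 = x1i)
    (hx1 : ∀ t ∈ Icc (0:ℝ) T,
      HasDerivAt x1 (A (x1 t) + (fderiv ℝ F (xd t)) (x1 t)
        + Z t • (xd t - F (xd t) + (fderiv ℝ F (xd t)) (xd t))) t) :
    ∃ C : ℝ, ∀ ε ∈ Icc (0:ℝ) 1, ∀ t ∈ Icc (0:ℝ) T,
      ‖x ε t - xd t - ε • x1 t‖ ≤ C * ε ^ 2 := by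
  have hLnn : 0 ≤ L := (norm_nonneg _).trans (hL 0)
  have hM2nn : 0 ≤ M2 := (norm_nonneg _).trans (hM2 0)
  -- bound on Z
  obtain ⟨Zb0, hZb0⟩ := isCompact_Icc.exists_bound_of_continuousOn
    (hZ.continuousOn : ContinuousOn Z (Icc (0:ℝ) T))
  set Zb : ℝ := max Zb0 0 with hZb_def
  have hZbnn : 0 ≤ Zb := le_max_right _ _
  have hZb : ∀ t ∈ Icc (0:ℝ) T, |Z t| ≤ Zb :=
    fun t ht => (hZb0 t ht).trans (le_max_left _ _)
  set K0 : ℝ := ‖A‖ + Zb + L with hK0_def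
  have hK0nn : 0 ≤ K0 := by positivity
  -- continuity of solutions
  have hxcont : ∀ ε ∈ Icc (0:ℝ) 1, ContinuousOn (x ε) (Icc 0 T) :=
    fun ε hε t ht => ((hx ε hε t ht).continuousAt).continuousWithinAt
  have hxdcont : ContinuousOn xd (Icc 0 T) :=
    fun t ht => ((hxd t ht).continuousAt).continuousWithinAt
  have hx1cont : ContinuousOn x1 (Icc 0 T) :=
    fun t ht => ((hx1 t ht).continuousAt).continuousWithinAt
  -- uniform bound on x ε
  set B : ℝ := (‖x0‖ + ‖x1i‖) * Real.exp (K0 * T) with hB_def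
  have hBnn : 0 ≤ B := by positivity
  have haZ : ∀ ε ∈ Icc (0:ℝ) 1, ∀ t ∈ Icc (0:ℝ) T, |ε * Z t| ≤ ε * Zb := by
    intro ε hε t ht
    rw [abs_mul, abs_of_nonneg hε.1]
    exact mul_le_mul_of_nonneg_left (hZb t ht) hε.1
  have haZ1 : ∀ ε ∈ Icc (0:ℝ) 1, ∀ t ∈ Icc (0:ℝ) T, |ε * Z t| ≤ Zb := by
    intro ε hε t ht
    refine (haZ ε hε t ht).trans ?_
    nlinarith [hε.1, hε.2]
  have hGnorm : ∀ (a : ℝ) (v : E),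
      ‖Real.exp (-a) • F (Real.exp a • v)‖ ≤ L * ‖v‖ := by
    intro a v
    rw [norm_smul, Real.norm_eq_abs, Real.abs_exp]
    have h1 : ‖F (Real.exp a • v)‖ ≤ L * (Real.exp a * ‖v‖) := by
      simpa [norm_smul, Real.abs_exp] using my_normF hF hF0 hL (Real.exp a • v)
    calc Real.exp (-a) * ‖F (Real.exp a • v)‖ ≤ Real.exp (-a) * (L * (Real.exp a * ‖v‖)) :=
      mul_le_mul_of_nonneg_left h1 (Real.exp_pos _).le
    _ = (Real.exp (-a) * Real.exp a) * (L * ‖v‖) := by ring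
    _ = L * ‖v‖ := by rw [← Real.exp_add]; simp
  have hxbound : ∀ ε ∈ Icc (0:ℝ) 1, ∀ t ∈ Icc (0:ℝ) T, ‖x ε t‖ ≤ B := by
    intro ε hε t ht
    have key := norm_le_gronwallBound_of_norm_deriv_right_le (a := 0) (b := T)
      (δ := ‖x0‖ + ‖x1i‖) (K := K0) (ε := 0)
      (f := x ε)
      (f' := fun t => A (x ε t) + (ε * Z t) • x ε t
        + Real.exp (-(ε * Z t)) • F (Real.exp (ε * Z t) • x ε t))
      (hxcont ε hε)
      (fun s hs => (hx ε hε s (Ico_subset_Icc_self hs)).hasDerivWithinAt.mono (Ici_subset_Ici.mpr le_rfl) |>.mono (by intro y hy; exact hy))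
      (by
        rw [hxinit ε hε]
        calc ‖x0 + ε • x1i‖ ≤ ‖x0‖ + ‖ε • x1i‖ := norm_add_le _ _
        _ ≤ ‖x0‖ + ‖x1i‖ := by
            rw [norm_smul, Real.norm_eq_abs, abs_of_nonneg hε.1]
            nlinarith [hε.1, hε.2, norm_nonneg x1i])
      (fun s hs => by
        have hs' : s ∈ Icc (0:ℝ) T := Ico_subset_Icc_self hs
        have h1 : ‖A (x ε s)‖ ≤ ‖A‖ * ‖x ε s‖ := A.le_opNorm _
        have h2 : ‖(ε * Z s) • x ε s‖ ≤ Zb * ‖x ε s‖ := by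
          rw [norm_smul, Real.norm_eq_abs]
          exact mul_le_mul_of_nonneg_right (haZ1 ε hε s hs') (norm_nonneg _)
        have h3 := hGnorm (ε * Z s) (x ε s)
        calc ‖_‖ ≤ ‖A (x ε s) + (ε * Z s) • x ε s‖
            + ‖Real.exp (-(ε * Z s)) • F (Real.exp (ε * Z s) • x ε s)‖ := norm_add_le _ _
        _ ≤ (‖A (x ε s)‖ + ‖(ε * Z s) • x ε s‖) + ‖_‖ := by
            gcongr; exact norm_add_le _ _
        _ ≤ K0 * ‖x ε s‖ + 0 := by rw [hK0_def]; nlinarith [norm_nonneg (x ε s)])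
      t ht
    calc ‖x ε t‖ ≤ gronwallBound (‖x0‖ + ‖x1i‖) K0 0 (t - 0) := key
    _ ≤ (‖x0‖ + ‖x1i‖ + 0 * T) * Real.exp (K0 * T) := by
        refine my_gronwallBound_le (by positivity) hK0nn le_rfl ?_ ?_
        · simpa using ht.1
        · simpa using ht.2
    _ = B := by rw [hB_def]; ring
  -- bounds for xd and x1
  obtain ⟨Bd0, hBd0⟩ := isCompact_Icc.exists_bound_of_continuousOn hxdcont
  obtain ⟨B10, hB10⟩ := isCompact_Icc.exists_bound_of_continuousOn hx1cont
  set Bd : ℝ := max Bd0 0 with hBd_def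
  have hBdnn : 0 ≤ Bd := le_max_right _ _
  have hBd : ∀ t ∈ Icc (0:ℝ) T, ‖xd t‖ ≤ Bd := fun t ht => (hBd0 t ht).trans (le_max_left _ _)
  set B1 : ℝ := max B10 0 with hB1_def
  have hB1nn : 0 ≤ B1 := le_max_right _ _
  have hB1 : ∀ t ∈ Icc (0:ℝ) T, ‖x1 t‖ ≤ B1 := fun t ht => (hB10 t ht).trans (le_max_left _ _)
  -- first-order estimate ‖x ε t - xd t‖ ≤ C1 * ε
  set c1 : ℝ := Zb * B + 2 * L * B * Zb with hc1_def
  have hc1nn : 0 ≤ c1 := by positivity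
  set C1 : ℝ := (‖x1i‖ + c1 * T) * Real.exp (K0 * T) with hC1_def
  have hC1nn : 0 ≤ C1 := by positivity
  have hfirst : ∀ ε ∈ Icc (0:ℝ) 1, ∀ t ∈ Icc (0:ℝ) T, ‖x ε t - xd t‖ ≤ C1 * ε := by
    intro ε hε t ht
    have key := norm_le_gronwallBound_of_norm_deriv_right_le (a := 0) (b := T)
      (δ := ε * ‖x1i‖) (K := K0) (ε := c1 * ε)
      (f := fun t => x ε t - xd t)
      (f' := fun s => (A (x ε s) + (ε * Z s) • x ε s
          + Real.exp (-(ε * Z s)) • F (Real.exp (ε * Z s) • x ε s)) - (A (xd s) + F (xd s)))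
      ((hxcont ε hε).sub hxdcont)
      (fun s hs => ((hx ε hε s (Ico_subset_Icc_self hs)).sub
        (hxd s (Ico_subset_Icc_self hs))).hasDerivWithinAt)
      (by
        show ‖x ε 0 - xd 0‖ ≤ ε * ‖x1i‖
        rw [hxinit ε hε, hxdinit]
        simp [norm_smul, Real.norm_eq_abs, abs_of_nonneg hε.1])
      (fun s hs => by
        show ‖(A (x ε s) + (ε * Z s) • x ε s
          + Real.exp (-(ε * Z s)) • F (Real.exp (ε * Z s) • x ε s)) - (A (xd s) + F (xd s))‖
          ≤ K0 * ‖x ε s - xd s‖ + c1 * ε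
        have hs' : s ∈ Icc (0:ℝ) T := Ico_subset_Icc_self hs
        have hid : (A (x ε s) + (ε * Z s) • x ε s
            + Real.exp (-(ε * Z s)) • F (Real.exp (ε * Z s) • x ε s)) - (A (xd s) + F (xd s))
          = A (x ε s - xd s) + (ε * Z s) • x ε s
            + (Real.exp (-(ε * Z s)) • F (Real.exp (ε * Z s) • x ε s) - F (x ε s))
            + (F (x ε s) - F (xd s)) := by
          rw [map_sub]; abel
        rw [hid]
        have n1 : ‖A (x ε s - xd s)‖ ≤ ‖A‖ * ‖x ε s - xd s‖ := A.le_opNorm _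
        have n2 : ‖(ε * Z s) • x ε s‖ ≤ (ε * Zb) * B := by
          rw [norm_smul, Real.norm_eq_abs]
          exact mul_le_mul (haZ ε hε s hs') (hxbound ε hε s hs') (norm_nonneg _)
            (by nlinarith [hε.1])
        have n3 : ‖Real.exp (-(ε * Z s)) • F (Real.exp (ε * Z s) • x ε s) - F (x ε s)‖
            ≤ 2 * L * B * (ε * Zb) := by
          refine (myPhiD_taylor1 hF hF0 hL (x ε s) (ε * Z s)).trans ?_
          exact mul_le_mul
            (mul_le_mul_of_nonneg_left (hxbound ε hε s hs') (by positivity : (0:ℝ) ≤ 2 * L))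
            (haZ ε hε s hs') (abs_nonneg _) (by positivity)
        have n4 : ‖F (x ε s) - F (xd s)‖ ≤ L * ‖x ε s - xd s‖ := my_lipF hF hL _ _
        have t1 := norm_add_le (A (x ε s - xd s) + (ε * Z s) • x ε s
          + (Real.exp (-(ε * Z s)) • F (Real.exp (ε * Z s) • x ε s) - F (x ε s)))
          (F (x ε s) - F (xd s))
        have t2 := norm_add_le (A (x ε s - xd s) + (ε * Z s) • x ε s)
          (Real.exp (-(ε * Z s)) • F (Real.exp (ε * Z s) • x ε s) - F (x ε s))
        have t3 := norm_add_le (A (x ε s - xd s)) ((ε * Z s) • x ε s)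
        have hK0' : (‖A‖ + L) * ‖x ε s - xd s‖ ≤ K0 * ‖x ε s - xd s‖ := by
          rw [hK0_def]
          nlinarith [norm_nonneg (x ε s - xd s)]
        have hc1e : c1 * ε = Zb * B * ε + 2 * L * B * (ε * Zb) := by rw [hc1_def]; ring
        have hn2' : ε * Zb * B = Zb * B * ε := by ring
        linarith)
      t ht
    calc ‖x ε t - xd t‖ ≤ gronwallBound (ε * ‖x1i‖) K0 (c1 * ε) (t - 0) := key
    _ ≤ (ε * ‖x1i‖ + c1 * ε * T) * Real.exp (K0 * T) := by
        refine my_gronwallBound_le (mul_nonneg hε.1 (norm_nonneg _)) hK0nn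
          (mul_nonneg hc1nn hε.1) ?_ ?_
        · simpa using ht.1
        · simpa using ht.2
    _ = C1 * ε := by rw [hC1_def]; ring
  -- second-order remainder
  set KC : ℝ := 2 * L * Real.exp Zb ^ 2 * B + 3 * M2 * Real.exp Zb ^ 3 * B ^ 2 with hKC_def
  have hKCnn : 0 ≤ KC := by positivity
  set c2 : ℝ := Zb * B1 + KC * Zb ^ 2 + Zb * M2 * C1 * Bd + Zb * M2 * C1 * C1 + M2 * C1 * C1
    with hc2_def
  have hc2nn : 0 ≤ c2 := by positivity
  refine ⟨c2 * T * Real.exp (K0 * T), ?_⟩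
  intro ε hε t ht
  have key := norm_le_gronwallBound_of_norm_deriv_right_le (a := 0) (b := T)
    (δ := 0) (K := K0) (ε := c2 * ε ^ 2)
    (f := fun t => x ε t - xd t - ε • x1 t)
    (f' := fun s =>
      A (x ε s - xd s - ε • x1 s)
      + (ε * Z s) • (x ε s - xd s - ε • x1 s)
      + (ε ^ 2 * Z s) • x1 s
      + (Real.exp (-(ε * Z s)) • F (Real.exp (ε * Z s) • x ε s) - F (x ε s)
          - (ε * Z s) • ((fderiv ℝ F (x ε s)) (x ε s) - F (x ε s)))
      + (ε * Z s) • (((fderiv ℝ F (x ε s)) (x ε s) - F (x ε s))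
          - ((fderiv ℝ F (xd s)) (xd s) - F (xd s)))
      + (F (x ε s) - F (xd s) - (fderiv ℝ F (xd s)) (x ε s - xd s))
      + (fderiv ℝ F (xd s)) (x ε s - xd s - ε • x1 s))
    (((hxcont ε hε).sub hxdcont).sub (hx1cont.const_smul ε))
    (fun s hs => by
      have hs' : s ∈ Icc (0:ℝ) T := Ico_subset_Icc_self hs
      have hder := ((hx ε hε s hs').sub (hxd s hs')).sub ((hx1 s hs').const_smul ε)
      have hid : (A (x ε s) + (ε * Z s) • x ε s
            + Real.exp (-(ε * Z s)) • F (Real.exp (ε * Z s) • x ε s))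
          - (A (xd s) + F (xd s))
          - ε • (A (x1 s) + (fderiv ℝ F (xd s)) (x1 s)
              + Z s • (xd s - F (xd s) + (fderiv ℝ F (xd s)) (xd s)))
        = A (x ε s - xd s - ε • x1 s)
          + (ε * Z s) • (x ε s - xd s - ε • x1 s)
          + (ε ^ 2 * Z s) • x1 s
          + (Real.exp (-(ε * Z s)) • F (Real.exp (ε * Z s) • x ε s) - F (x ε s)
              - (ε * Z s) • ((fderiv ℝ F (x ε s)) (x ε s) - F (x ε s)))
          + (ε * Z s) • (((fderiv ℝ F (x ε s)) (x ε s) - F (x ε s))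
              - ((fderiv ℝ F (xd s)) (xd s) - F (xd s)))
          + (F (x ε s) - F (xd s) - (fderiv ℝ F (xd s)) (x ε s - xd s))
          + (fderiv ℝ F (xd s)) (x ε s - xd s - ε • x1 s) := by
        simp only [map_sub, map_smul, smul_sub, smul_add, smul_smul]
        module
      rw [hid] at hder
      exact hder.hasDerivWithinAt)
    (by
      show ‖x ε 0 - xd 0 - ε • x1 0‖ ≤ 0
      rw [hxinit ε hε, hxdinit, hx1init]
      simp)
    (fun s hs => by
      have hs' : s ∈ Icc (0:ℝ) T := Ico_subset_Icc_self hs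
      show ‖A (x ε s - xd s - ε • x1 s)
          + (ε * Z s) • (x ε s - xd s - ε • x1 s)
          + (ε ^ 2 * Z s) • x1 s
          + (Real.exp (-(ε * Z s)) • F (Real.exp (ε * Z s) • x ε s) - F (x ε s)
              - (ε * Z s) • ((fderiv ℝ F (x ε s)) (x ε s) - F (x ε s)))
          + (ε * Z s) • (((fderiv ℝ F (x ε s)) (x ε s) - F (x ε s))
              - ((fderiv ℝ F (xd s)) (xd s) - F (xd s)))
          + (F (x ε s) - F (xd s) - (fderiv ℝ F (xd s)) (x ε s - xd s))
          + (fderiv ℝ F (xd s)) (x ε s - xd s - ε • x1 s)‖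
        ≤ K0 * ‖x ε s - xd s - ε • x1 s‖ + c2 * ε ^ 2
      have hd := hfirst ε hε s hs'
      have hd' : ‖xd s - x ε s‖ ≤ C1 * ε := by rw [norm_sub_rev]; exact hd
      have n1 : ‖A (x ε s - xd s - ε • x1 s)‖ ≤ ‖A‖ * ‖x ε s - xd s - ε • x1 s‖ := A.le_opNorm _
      have n2 : ‖(ε * Z s) • (x ε s - xd s - ε • x1 s)‖ ≤ Zb * ‖x ε s - xd s - ε • x1 s‖ := by
        rw [norm_smul, Real.norm_eq_abs]
        exact mul_le_mul_of_nonneg_right (haZ1 ε hε s hs') (norm_nonneg _)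
      have n3 : ‖(ε ^ 2 * Z s) • x1 s‖ ≤ Zb * B1 * ε ^ 2 := by
        rw [norm_smul, Real.norm_eq_abs]
        have h1 : |ε ^ 2 * Z s| ≤ ε ^ 2 * Zb := by
          rw [abs_mul, abs_of_nonneg (sq_nonneg ε)]
          exact mul_le_mul_of_nonneg_left (hZb s hs') (sq_nonneg ε)
        calc |ε ^ 2 * Z s| * ‖x1 s‖ ≤ (ε ^ 2 * Zb) * B1 :=
          mul_le_mul h1 (hB1 s hs') (norm_nonneg _) (by positivity)
        _ = Zb * B1 * ε ^ 2 := by ring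
      have n4 : ‖Real.exp (-(ε * Z s)) • F (Real.exp (ε * Z s) • x ε s) - F (x ε s)
          - (ε * Z s) • ((fderiv ℝ F (x ε s)) (x ε s) - F (x ε s))‖ ≤ KC * Zb ^ 2 * ε ^ 2 := by
        refine (myPhiD_taylor2 hF hF0 hL hM2 hZbnn (x ε s) (haZ1 ε hε s hs')).trans ?_
        have hx' := hxbound ε hε s hs'
        have hKx : 2 * L * Real.exp Zb ^ 2 * ‖x ε s‖ + 3 * M2 * Real.exp Zb ^ 3 * ‖x ε s‖ ^ 2
            ≤ KC := by
          rw [hKC_def]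
          have s1 := mul_le_mul_of_nonneg_left hx'
            (by positivity : (0:ℝ) ≤ 2 * L * Real.exp Zb ^ 2)
          have s2 := mul_le_mul_of_nonneg_left
            (mul_le_mul hx' hx' (norm_nonneg _) hBnn)
            (by positivity : (0:ℝ) ≤ 3 * M2 * Real.exp Zb ^ 3)
          nlinarith [s1, s2]
        have haa : |ε * Z s| * |ε * Z s| ≤ (ε * Zb) * (ε * Zb) :=
          mul_le_mul (haZ ε hε s hs') (haZ ε hε s hs') (abs_nonneg _)
            (mul_nonneg hε.1 hZbnn)
        calc (2 * L * Real.exp Zb ^ 2 * ‖x ε s‖ + 3 * M2 * Real.exp Zb ^ 3 * ‖x ε s‖ ^ 2)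
              * (|ε * Z s| * |ε * Z s|)
            ≤ KC * ((ε * Zb) * (ε * Zb)) :=
          mul_le_mul hKx haa (mul_nonneg (abs_nonneg _) (abs_nonneg _)) hKCnn
        _ = KC * Zb ^ 2 * ε ^ 2 := by ring
      have n5 : ‖(ε * Z s) • (((fderiv ℝ F (x ε s)) (x ε s) - F (x ε s))
            - ((fderiv ℝ F (xd s)) (xd s) - F (xd s)))‖
          ≤ (Zb * M2 * C1 * Bd + Zb * M2 * C1 * C1) * ε ^ 2 := by
        rw [norm_smul, Real.norm_eq_abs]
        have hh := my_h_lip hF hM2 (x ε s) (xd s)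
        have e1 : M2 * ‖x ε s - xd s‖ * ‖xd s‖ ≤ M2 * (C1 * ε) * Bd :=
          mul_le_mul (mul_le_mul_of_nonneg_left hd hM2nn) (hBd s hs') (norm_nonneg _)
            (mul_nonneg hM2nn (mul_nonneg hC1nn hε.1))
        have e2 : M2 * ‖xd s - x ε s‖ * ‖xd s - x ε s‖ ≤ M2 * (C1 * ε) * (C1 * ε) :=
          mul_le_mul (mul_le_mul_of_nonneg_left hd' hM2nn) hd' (norm_nonneg _)
            (mul_nonneg hM2nn (mul_nonneg hC1nn hε.1))
        have hε3 : ε ^ 3 ≤ ε ^ 2 := by nlinarith [hε.1, hε.2]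
        have hmid : ‖((fderiv ℝ F (x ε s)) (x ε s) - F (x ε s))
              - ((fderiv ℝ F (xd s)) (xd s) - F (xd s))‖
            ≤ M2 * (C1 * ε) * Bd + M2 * (C1 * ε) * (C1 * ε) := hh.trans (by linarith)
        refine (mul_le_mul (haZ ε hε s hs') hmid (norm_nonneg _)
          (mul_nonneg hε.1 hZbnn)).trans ?_
        nlinarith [mul_le_mul_of_nonneg_left hε3
          (by positivity : (0:ℝ) ≤ Zb * M2 * C1 * C1)]
      have n6 : ‖F (x ε s) - F (xd s) - (fderiv ℝ F (xd s)) (x ε s - xd s)‖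
          ≤ M2 * C1 * C1 * ε ^ 2 := by
        refine (my_taylorF hF hM2 (xd s) (x ε s)).trans ?_
        nlinarith [mul_le_mul_of_nonneg_left
          (mul_le_mul hd hd (norm_nonneg _) (mul_nonneg hC1nn hε.1)) hM2nn]
      have n7 : ‖(fderiv ℝ F (xd s)) (x ε s - xd s - ε • x1 s)‖
          ≤ L * ‖x ε s - xd s - ε • x1 s‖ :=
        ((fderiv ℝ F (xd s)).le_opNorm _).trans
          (mul_le_mul_of_nonneg_right (hL _) (norm_nonneg _))
      have t1 := norm_add_le (A (x ε s - xd s - ε • x1 s)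
        + (ε * Z s) • (x ε s - xd s - ε • x1 s)
        + (ε ^ 2 * Z s) • x1 s
        + (Real.exp (-(ε * Z s)) • F (Real.exp (ε * Z s) • x ε s) - F (x ε s)
            - (ε * Z s) • ((fderiv ℝ F (x ε s)) (x ε s) - F (x ε s)))
        + (ε * Z s) • (((fderiv ℝ F (x ε s)) (x ε s) - F (x ε s))
            - ((fderiv ℝ F (xd s)) (xd s) - F (xd s)))
        + (F (x ε s) - F (xd s) - (fderiv ℝ F (xd s)) (x ε s - xd s)))
        ((fderiv ℝ F (xd s)) (x ε s - xd s - ε • x1 s))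
      have t2 := norm_add_le (A (x ε s - xd s - ε • x1 s)
        + (ε * Z s) • (x ε s - xd s - ε • x1 s)
        + (ε ^ 2 * Z s) • x1 s
        + (Real.exp (-(ε * Z s)) • F (Real.exp (ε * Z s) • x ε s) - F (x ε s)
            - (ε * Z s) • ((fderiv ℝ F (x ε s)) (x ε s) - F (x ε s)))
        + (ε * Z s) • (((fderiv ℝ F (x ε s)) (x ε s) - F (x ε s))
            - ((fderiv ℝ F (xd s)) (xd s) - F (xd s))))
        (F (x ε s) - F (xd s) - (fderiv ℝ F (xd s)) (x ε s - xd s))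
      have t3 := norm_add_le (A (x ε s - xd s - ε • x1 s)
        + (ε * Z s) • (x ε s - xd s - ε • x1 s)
        + (ε ^ 2 * Z s) • x1 s
        + (Real.exp (-(ε * Z s)) • F (Real.exp (ε * Z s) • x ε s) - F (x ε s)
            - (ε * Z s) • ((fderiv ℝ F (x ε s)) (x ε s) - F (x ε s))))
        ((ε * Z s) • (((fderiv ℝ F (x ε s)) (x ε s) - F (x ε s))
            - ((fderiv ℝ F (xd s)) (xd s) - F (xd s))))
      have t4 := norm_add_le (A (x ε s - xd s - ε • x1 s)
        + (ε * Z s) • (x ε s - xd s - ε • x1 s)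
        + (ε ^ 2 * Z s) • x1 s)
        (Real.exp (-(ε * Z s)) • F (Real.exp (ε * Z s) • x ε s) - F (x ε s)
            - (ε * Z s) • ((fderiv ℝ F (x ε s)) (x ε s) - F (x ε s)))
      have t5 := norm_add_le (A (x ε s - xd s - ε • x1 s)
        + (ε * Z s) • (x ε s - xd s - ε • x1 s))
        ((ε ^ 2 * Z s) • x1 s)
      have t6 := norm_add_le (A (x ε s - xd s - ε • x1 s))
        ((ε * Z s) • (x ε s - xd s - ε • x1 s))
      have hK0' : (‖A‖ + Zb + L) * ‖x ε s - xd s - ε • x1 s‖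
          = K0 * ‖x ε s - xd s - ε • x1 s‖ := by rw [hK0_def]
      have hc2e : c2 * ε ^ 2 = Zb * B1 * ε ^ 2 + KC * Zb ^ 2 * ε ^ 2
          + (Zb * M2 * C1 * Bd + Zb * M2 * C1 * C1) * ε ^ 2 + M2 * C1 * C1 * ε ^ 2 := by
        rw [hc2_def]; ring
      linarith)
    t ht
  calc ‖x ε t - xd t - ε • x1 t‖ ≤ gronwallBound 0 K0 (c2 * ε ^ 2) (t - 0) := key
  _ ≤ (0 + c2 * ε ^ 2 * T) * Real.exp (K0 * T) := by
      refine my_gronwallBound_le le_rfl hK0nn (by positivity) ?_ ?_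
      · simpa using ht.1
      · simpa using ht.2
  _ = c2 * T * Real.exp (K0 * T) * ε ^ 2 := by ring


end Main

set_option maxHeartbeats 1000000 in
/-- First-order asymptotic expansion `ψ_ε = ψ⁽ᵈ⁾ + ε ψ⁽¹⁾ + O(ε²)` of the
difference of two solutions of the random evolutionary equation. -/
theorem approx_difference_first_order
    {n : ℕ} (A : EuclideanSpace ℝ (Fin n) →L[ℝ] EuclideanSpace ℝ (Fin n))
    (Z : ℝ → ℝ) (hZ : Continuous Z)
    (F : EuclideanSpace ℝ (Fin n) → EuclideanSpace ℝ (Fin n))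
    (hF : ContDiff ℝ 2 F) (hF0 : F 0 = 0)
    (hDF : ∃ C : ℝ, ∀ x, ‖fderiv ℝ F x‖ ≤ C)
    (hD2F : ∃ C : ℝ, ∀ x, ‖fderiv ℝ (fderiv ℝ F) x‖ ≤ C)
    (Φ0 ψ0 ψ1 : EuclideanSpace ℝ (Fin n))
    (T : ℝ) (hT : 0 < T)
    -- the family of solutions Φ_ε
    (Φ : ℝ → ℝ → EuclideanSpace ℝ (Fin n))
    (hΦinit : ∀ ε ∈ Set.Icc (0:ℝ) 1, Φ ε 0 = Φ0)
    (hΦ : ∀ ε ∈ Set.Icc (0:ℝ) 1, ∀ t ∈ Set.Icc (0:ℝ) T,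
      HasDerivAt (Φ ε)
        (A (Φ ε t) + (ε * Z t) • Φ ε t
          + Real.exp (-(ε * Z t)) • F (Real.exp (ε * Z t) • Φ ε t)) t)
    -- the family of differences ψ_ε
    (ψ : ℝ → ℝ → EuclideanSpace ℝ (Fin n))
    (hψinit : ∀ ε ∈ Set.Icc (0:ℝ) 1, ψ ε 0 = ψ0 + ε • ψ1)
    (hψ : ∀ ε ∈ Set.Icc (0:ℝ) 1, ∀ t ∈ Set.Icc (0:ℝ) T,
      HasDerivAt (ψ ε)
        (A (ψ ε t) + (ε * Z t) • ψ ε t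
          + Real.exp (-(ε * Z t)) •
            (F (Real.exp (ε * Z t) • (ψ ε t + Φ ε t))
              - F (Real.exp (ε * Z t) • Φ ε t))) t)
    -- zeroth-order term Φ⁽ᵈ⁾ for Φ
    (Φd : ℝ → EuclideanSpace ℝ (Fin n))
    (hΦdinit : Φd 0 = Φ0)
    (hΦd : ∀ t ∈ Set.Icc (0:ℝ) T,
      HasDerivAt Φd (A (Φd t) + F (Φd t)) t)
    -- first-order term Φ⁽¹⁾ for Φ
    (Φ1 : ℝ → EuclideanSpace ℝ (Fin n))
    (hΦ1init : Φ1 0 = 0)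
    (hΦ1 : ∀ t ∈ Set.Icc (0:ℝ) T,
      HasDerivAt Φ1
        (A (Φ1 t) + (fderiv ℝ F (Φd t)) (Φ1 t)
          + Z t • (Φd t - F (Φd t) + (fderiv ℝ F (Φd t)) (Φd t))) t)
    -- zeroth-order term ψ⁽ᵈ⁾ for ψ
    (ψd : ℝ → EuclideanSpace ℝ (Fin n))
    (hψdinit : ψd 0 = ψ0)
    (hψd : ∀ t ∈ Set.Icc (0:ℝ) T,
      HasDerivAt ψd (A (ψd t) + (F (ψd t + Φd t) - F (Φd t))) t)
    -- first-order term ψ⁽¹⁾ for ψ, with forcing term λ̃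
    (ψ1f : ℝ → EuclideanSpace ℝ (Fin n))
    (hψ1finit : ψ1f 0 = ψ1)
    (hψ1f : ∀ t ∈ Set.Icc (0:ℝ) T,
      HasDerivAt ψ1f
        (A (ψ1f t) + (fderiv ℝ F (ψd t + Φd t)) (ψ1f t)
          + (Z t • ψd t
            + Z t • ((fderiv ℝ F (ψd t + Φd t)) (ψd t + Φd t) - F (ψd t + Φd t))
            + (fderiv ℝ F (ψd t + Φd t)) (Φ1 t)
            - Z t • ((fderiv ℝ F (Φd t)) (Φd t) - F (Φd t))
            - (fderiv ℝ F (Φd t)) (Φ1 t))) t) :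
    ∃ C : ℝ, ∀ ε ∈ Set.Icc (0:ℝ) 1, ∀ t ∈ Set.Icc (0:ℝ) T,
      ‖ψ ε t - ψd t - ε • ψ1f t‖ ≤ C * ε ^ 2 := by
  obtain ⟨L, hL⟩ := hDF
  obtain ⟨M2, hM2⟩ := hD2F
  -- expansion of Φ
  obtain ⟨CΦ, hCΦ⟩ := abstract_expansion A Z hZ F hF hF0 hL hM2 Φ0 0 T hT Φ
    (fun ε hε => by rw [hΦinit ε hε]; simp) hΦ Φd hΦdinit hΦd Φ1 hΦ1init hΦ1
  -- expansion of u = ψ + Φ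
  obtain ⟨Cu, hCu⟩ := abstract_expansion A Z hZ F hF hF0 hL hM2 (ψ0 + Φ0) ψ1 T hT
    (fun ε t => ψ ε t + Φ ε t)
    (fun ε hε => by show ψ ε 0 + Φ ε 0 = (ψ0 + Φ0) + ε • ψ1; rw [hψinit ε hε, hΦinit ε hε]; abel)
    (fun ε hε t ht => by
      have h := (hψ ε hε t ht).add (hΦ ε hε t ht)
      have hid : (A (ψ ε t) + (ε * Z t) • ψ ε t
            + Real.exp (-(ε * Z t)) • (F (Real.exp (ε * Z t) • (ψ ε t + Φ ε t))
              - F (Real.exp (ε * Z t) • Φ ε t)))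
          + (A (Φ ε t) + (ε * Z t) • Φ ε t
            + Real.exp (-(ε * Z t)) • F (Real.exp (ε * Z t) • Φ ε t))
        = A (ψ ε t + Φ ε t) + (ε * Z t) • (ψ ε t + Φ ε t)
          + Real.exp (-(ε * Z t)) • F (Real.exp (ε * Z t) • (ψ ε t + Φ ε t)) := by
        simp only [map_add, smul_add, smul_sub]
        abel
      rw [hid] at h
      exact h)
    (fun t => ψd t + Φd t)
    (by show ψd 0 + Φd 0 = ψ0 + Φ0; rw [hψdinit, hΦdinit])
    (fun t ht => by
      have h := (hψd t ht).add (hΦd t ht)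
      have hid : (A (ψd t) + (F (ψd t + Φd t) - F (Φd t))) + (A (Φd t) + F (Φd t))
          = A (ψd t + Φd t) + F (ψd t + Φd t) := by
        simp only [map_add]
        abel
      rw [hid] at h
      exact h)
    (fun t => ψ1f t + Φ1 t)
    (by show ψ1f 0 + Φ1 0 = ψ1; rw [hψ1finit, hΦ1init, add_zero])
    (fun t ht => by
      have h := (hψ1f t ht).add (hΦ1 t ht)
      have hid : (A (ψ1f t) + (fderiv ℝ F (ψd t + Φd t)) (ψ1f t)
            + (Z t • ψd t
              + Z t • ((fderiv ℝ F (ψd t + Φd t)) (ψd t + Φd t) - F (ψd t + Φd t))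
              + (fderiv ℝ F (ψd t + Φd t)) (Φ1 t)
              - Z t • ((fderiv ℝ F (Φd t)) (Φd t) - F (Φd t))
              - (fderiv ℝ F (Φd t)) (Φ1 t)))
          + (A (Φ1 t) + (fderiv ℝ F (Φd t)) (Φ1 t)
            + Z t • (Φd t - F (Φd t) + (fderiv ℝ F (Φd t)) (Φd t)))
        = A (ψ1f t + Φ1 t) + (fderiv ℝ F (ψd t + Φd t)) (ψ1f t + Φ1 t)
          + Z t • ((ψd t + Φd t) - F (ψd t + Φd t)
              + (fderiv ℝ F (ψd t + Φd t)) (ψd t + Φd t)) := by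
        simp only [map_add, smul_add, smul_sub]
        abel
      rw [hid] at h
      exact h)
  refine ⟨Cu + CΦ, fun ε hε t ht => ?_⟩
  have hid : ψ ε t - ψd t - ε • ψ1f t
      = ((ψ ε t + Φ ε t) - (ψd t + Φd t) - ε • (ψ1f t + Φ1 t))
        - (Φ ε t - Φd t - ε • Φ1 t) := by
    simp only [smul_add]
    abel
  rw [hid]
  calc ‖_ - _‖ ≤ ‖(ψ ε t + Φ ε t) - (ψd t + Φd t) - ε • (ψ1f t + Φ1 t)‖
      + ‖Φ ε t - Φd t - ε • Φ1 t‖ := norm_sub_le _ _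
  _ ≤ Cu * ε ^ 2 + CΦ * ε ^ 2 := add_le_add (hCu ε hε t ht) (hCΦ ε hε t ht)
  _ = (Cu + CΦ) * ε ^ 2 := by ring
end

section
/- Let A be a continuous linear map on ℝⁿ, F : ℝⁿ → ℝⁿ continuous, w : ℝ → ℝ continuous, ε > 0, and let z : ℝ → ℝ be continuously differentiable with z'(t) = −z(t) + ε w(t). If u : ℝ → ℝⁿ is differentiable and satisfies u'(t) = A u(t) + z(t) u(t) + e^{−z(t)} F(e^{z(t)} u(t)), then U(t) := e^{z(t)} u(t) is differentiable and satisfies U'(t) = A U(t) + F(U(t)) + ε w(t) U(t). -/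
/-- Pathwise conjugation: if `z' = -z + ε w` and
`u' = A u + z u + e^{-z} F(e^{z} u)`, then `U := e^{z} u` satisfies
`U' = A U + F(U) + ε w U`. -/
theorem conjugation_to_original_equation
    {n : ℕ} (A : EuclideanSpace ℝ (Fin n) →L[ℝ] EuclideanSpace ℝ (Fin n))
    (F : EuclideanSpace ℝ (Fin n) → EuclideanSpace ℝ (Fin n))
    (hF : Continuous F)
    (w : ℝ → ℝ) (hw : Continuous w)
    (ε : ℝ) (hε : 0 < ε)
    (z : ℝ → ℝ)
    (hz : ∀ t : ℝ, HasDerivAt z (-z t + ε * w t) t)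
    (u : ℝ → EuclideanSpace ℝ (Fin n))
    (hu : ∀ t : ℝ,
      HasDerivAt u
        (A (u t) + z t • u t + Real.exp (-z t) • F (Real.exp (z t) • u t)) t) :
    ∀ t : ℝ,
      HasDerivAt (fun s => Real.exp (z s) • u s)
        (A (Real.exp (z t) • u t) + F (Real.exp (z t) • u t)
          + (ε * w t) • (Real.exp (z t) • u t)) t := by
  intro t
  have hez : HasDerivAt (fun s => Real.exp (z s))
      (Real.exp (z t) * (-z t + ε * w t)) t := (hz t).exp
  have hU := hez.smul (hu t)
  convert hU using 1
  case e'_4 | e'_5 | e'_6 | e'_8 => rfl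
  have h1 : Real.exp (z t) • (Real.exp (-z t) •
      F (Real.exp (z t) • u t)) = F (Real.exp (z t) • u t) := by
    rw [smul_smul, ← Real.exp_add]
    simp
  rw [map_smul, smul_add, smul_add, h1]
  rw [smul_smul]
  module
end

section
/- Let A be a continuous linear map on ℝⁿ and let Pˢ, Pᵘ be complementary continuous projections (Pˢ + Pᵘ = I) commuting with e^{At} for all t, such that e^{At} restricted to the range of Pᵘ is invertible for all t, and such that there are constants K > 0 and α > 0 > β with ‖e^{At} Pᵘ x‖ ≤ K e^{αt}‖x‖ for t ≤ 0 and ‖e^{At} Pˢ x‖ ≤ K e^{βt}‖x‖ for t ≥ 0. Let z : ℝ → ℝ be continuous with δ := sup_t |z(t)| satisfying β + δ < η < α − δ for some η, let G : [0,∞) × ℝⁿ → ℝⁿ be continuous and Lipschitz in its second variable, and let Φ : [0,∞) → ℝⁿ be continuous. Suppose ψ : [0,∞) → ℝⁿ is continuous, satisfies sup_{t ≥ 0} e^{−ηt − ∫₀ᵗ z(τ)dτ} ‖ψ(t)‖ < ∞, and satisfies for all t ≥ 0 the Lyapunov–Perron integral equation ψ(t) = e^{At + ∫₀ᵗ z(s)ds}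 ξ + ∫₀ᵗ e^{A(t−s) + ∫ₛᵗ z(r)dr} Pˢ [G(s, ψ(s)+Φ(s)) − G(s, Φ(s))] ds − ∫_t^∞ e^{A(t−s) + ∫ₛᵗ z(r)dr} Pᵘ [G(s, ψ(s)+Φ(s)) − G(s, Φ(s))] ds, where ξ ∈ range(Pˢ) (all integrals converge absolutely). Then ψ is continuously differentiable on (0,∞) and satisfies ψ'(t) = A ψ(t) + z(t) ψ(t) + G(t, ψ(t)+Φ(t)) − G(t, Φ(t)), with Pˢ ψ(0) = ξ. -/
open MeasureTheory

set_option synthInstance.maxHeartbeats 1000000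
set_option maxHeartbeats 2000000

namespace LPAux

variable {n : ℕ}

lemma exp_apply_exp (A : EuclideanSpace ℝ (Fin n) →L[ℝ] EuclideanSpace ℝ (Fin n))
    (a b : ℝ) (x : EuclideanSpace ℝ (Fin n)) :
    NormedSpace.exp (a • A) (NormedSpace.exp (b • A) x)
      = NormedSpace.exp ((a + b) • A) x := by
  have h : NormedSpace.exp ((a + b) • A)
      = NormedSpace.exp (a • A) * NormedSpace.exp (b • A) := by
    rw [show (a + b) • A = a • A + b • A from add_smul a b A]
    letI : NormedAlgebra ℚ (EuclideanSpace ℝ (Fin n) →L[ℝ] EuclideanSpace ℝ (Fin n)) :=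
      .restrictScalars ℚ ℝ _
    apply NormedSpace.exp_add_of_commute
    show (a • A) * (b • A) = (b • A) * (a • A)
    refine ContinuousLinearMap.ext fun x => ?_
    simp only [ContinuousLinearMap.mul_apply, ContinuousLinearMap.smul_apply, _root_.map_smul]
    rw [smul_comm]
  rw [h, ContinuousLinearMap.mul_apply]

lemma exp_zero_apply (A : EuclideanSpace ℝ (Fin n) →L[ℝ] EuclideanSpace ℝ (Fin n))
    (x : EuclideanSpace ℝ (Fin n)) :
    NormedSpace.exp ((0:ℝ) • A) x = x := by
  rw [show (0:ℝ) • A = 0 from zero_smul ℝ A, NormedSpace.exp_zero, ContinuousLinearMap.one_apply]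

end LPAux

/-- A function in the weighted space `Ĉ⁺_η` satisfying the Lyapunov–Perron
integral equation is a solution of the differential equation
`ψ' = A ψ + z(t) ψ + G(t, ψ + Φ) - G(t, Φ)` with `Pˢ ψ(0) = ξ`. -/
theorem lyapunov_perron_implies_ode
    {n : ℕ} (A : EuclideanSpace ℝ (Fin n) →L[ℝ] EuclideanSpace ℝ (Fin n))
    (Ps Pu : EuclideanSpace ℝ (Fin n) →L[ℝ] EuclideanSpace ℝ (Fin n))
    (hPs : Ps.comp Ps = Ps) (hPu : Pu.comp Pu = Pu)
    (hcompl : Ps + Pu = ContinuousLinearMap.id ℝ (EuclideanSpace ℝ (Fin n)))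
    (hcomm : ∀ t : ℝ, (NormedSpace.exp (t • A)).comp Pu
      = Pu.comp (NormedSpace.exp (t • A)))
    (hbij : ∀ t : ℝ,
      Set.BijOn (fun x => NormedSpace.exp (t • A) x) (Set.range Pu) (Set.range Pu))
    (K α β : ℝ) (hK : 0 < K) (hα : 0 < α) (hβ : β < 0)
    (hdichU : ∀ t ≤ (0:ℝ), ∀ x,
      ‖NormedSpace.exp (t • A) (Pu x)‖ ≤ K * Real.exp (α * t) * ‖x‖)
    (hdichS : ∀ t ≥ (0:ℝ), ∀ x,
      ‖NormedSpace.exp (t • A) (Ps x)‖ ≤ K * Real.exp (β * t) * ‖x‖)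
    (z : ℝ → ℝ) (hz : Continuous z)
    (δ η : ℝ) (hδ : ∀ t : ℝ, |z t| ≤ δ)
    (hη₁ : β + δ < η) (hη₂ : η < α - δ)
    (G : ℝ → EuclideanSpace ℝ (Fin n) → EuclideanSpace ℝ (Fin n))
    (hGcont : ContinuousOn (fun p : ℝ × EuclideanSpace ℝ (Fin n) => G p.1 p.2)
      (Set.Ici 0 ×ˢ Set.univ))
    (L : ℝ) (hGLip : ∀ t ∈ Set.Ici (0:ℝ), ∀ x y, ‖G t x - G t y‖ ≤ L * ‖x - y‖)
    (Φ : ℝ → EuclideanSpace ℝ (Fin n)) (hΦ : ContinuousOn Φ (Set.Ici 0))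
    (ψ : ℝ → EuclideanSpace ℝ (Fin n)) (hψcont : ContinuousOn ψ (Set.Ici 0))
    (hψbdd : ∃ M : ℝ, ∀ t ≥ (0:ℝ),
      Real.exp (-(η * t) - ∫ τ in (0:ℝ)..t, z τ) * ‖ψ t‖ ≤ M)
    (ξ : EuclideanSpace ℝ (Fin n)) (hξ : ξ ∈ Set.range Ps)
    (hInt : ∀ t ≥ (0:ℝ),
      IntegrableOn
        (fun s => Real.exp (∫ r in s..t, z r) •
          (NormedSpace.exp ((t - s) • A)) (Pu (G s (ψ s + Φ s) - G s (Φ s))))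
        (Set.Ioi t))
    (heq : ∀ t ≥ (0:ℝ),
      ψ t = Real.exp (∫ s in (0:ℝ)..t, z s) • (NormedSpace.exp (t • A)) ξ
        + (∫ s in (0:ℝ)..t, Real.exp (∫ r in s..t, z r) •
            (NormedSpace.exp ((t - s) • A)) (Ps (G s (ψ s + Φ s) - G s (Φ s))))
        - ∫ s in Set.Ioi t, Real.exp (∫ r in s..t, z r) •
            (NormedSpace.exp ((t - s) • A)) (Pu (G s (ψ s + Φ s) - G s (Φ s)))) :
    (∀ t ∈ Set.Ioi (0:ℝ),
      HasDerivAt ψ (A (ψ t) + z t • ψ t + (G t (ψ t + Φ t) - G t (Φ t))) t)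
    ∧ Ps (ψ 0) = ξ := by
  have hzint : ∀ a b : ℝ, IntervalIntegrable z MeasureTheory.volume a b :=
    fun a b => hz.intervalIntegrable a b
  set g : ℝ → EuclideanSpace ℝ (Fin n) := fun s => G s (ψ s + Φ s) - G s (Φ s) with hgdef
  set c : ℝ → ℝ := fun t => Real.exp (∫ s in (0:ℝ)..t, z s) with hcdef
  set Ex : ℝ → (EuclideanSpace ℝ (Fin n) →L[ℝ] EuclideanSpace ℝ (Fin n)) :=
    fun t => NormedSpace.exp (t • A) with hExdef
  have hcpos : ∀ t, 0 < c t := fun t => Real.exp_pos _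
  have hcne : ∀ t, c t ≠ 0 := fun t => (hcpos t).ne'
  have hc' : ∀ t, HasDerivAt c (z t * c t) t := by
    intro t
    have h1 : HasDerivAt (fun u => ∫ s in (0:ℝ)..u, z s) (z t) t :=
      (hz.integral_hasStrictDerivAt 0 t).hasDerivAt
    have h2 := h1.exp
    simpa [mul_comm] using h2
  have hccont : Continuous c := by
    rw [continuous_iff_continuousAt]; exact fun t => (hc' t).continuousAt
  have hEx' : ∀ t, HasDerivAt Ex (A * Ex t) t := fun t => hasDerivAt_exp_smul_const' A t
  have hExcont : Continuous Ex := by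
    rw [continuous_iff_continuousAt]; exact fun t => (hEx' t).continuousAt
  have hexp2 : ∀ (a b : ℝ) (x : EuclideanSpace ℝ (Fin n)), Ex a (Ex b x) = Ex (a + b) x :=
    fun a b x => LPAux.exp_apply_exp A a b x
  have hEx0 : ∀ x, Ex 0 x = x := fun x => LPAux.exp_zero_apply A x
  have hcdiv : ∀ s t : ℝ, c t * (c s)⁻¹ = Real.exp (∫ r in s..t, z r) := by
    intro s t
    have hsub := intervalIntegral.integral_interval_sub_left (hzint 0 t) (hzint 0 s)
    show Real.exp (∫ r in (0:ℝ)..t, z r) * (Real.exp (∫ r in (0:ℝ)..s, z r))⁻¹ = _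
    rw [← hsub, Real.exp_sub, div_eq_mul_inv]
  have keyPt : ∀ (t s : ℝ) (y : EuclideanSpace ℝ (Fin n)),
      c t • Ex t ((c s)⁻¹ • Ex (-s) y) = Real.exp (∫ r in s..t, z r) • Ex (t - s) y := by
    intro t s y
    rw [_root_.map_smul, smul_smul, hcdiv s t, hexp2, ← sub_eq_add_neg]
  -- projection facts
  have hPsPs : ∀ x, Ps (Ps x) = Ps x := fun x => ContinuousLinearMap.ext_iff.1 hPs x
  have hsum : ∀ x : EuclideanSpace ℝ (Fin n), Ps x + Pu x = x :=
    fun x => ContinuousLinearMap.ext_iff.1 hcompl x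
  have hPsPu : ∀ x, Ps (Pu x) = 0 := by
    intro x
    have h1 : Ps (Ps x + Pu x) = Ps x := by rw [hsum]
    rw [map_add, hPsPs] at h1
    exact (add_eq_left).1 h1
  have hExPu : ∀ t x, Ex t (Pu x) = Pu (Ex t x) := fun t x =>
    ContinuousLinearMap.ext_iff.1 (hcomm t) x
  have hExPs : ∀ t x, Ex t (Ps x) = Ps (Ex t x) := by
    intro t x
    have h2 : ∀ y : EuclideanSpace ℝ (Fin n), Ps y = y - Pu y := fun y => by
      rw [eq_sub_iff_add_eq]; exact hsum y
    rw [h2, map_sub, hExPu, ← h2]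
  -- continuity of g
  have hgc : ContinuousOn g (Set.Ici 0) := by
    apply ContinuousOn.sub
    · exact hGcont.comp (continuousOn_id.prodMk (hψcont.add hΦ)) fun s hs => ⟨hs, trivial⟩
    · exact hGcont.comp (continuousOn_id.prodMk hΦ) fun s hs => ⟨hs, trivial⟩
  set gm : ℝ → EuclideanSpace ℝ (Fin n) := fun s => g (max s 0) with hgmdef
  have hgmc : Continuous gm :=
    hgc.comp_continuous (continuous_id.max continuous_const) fun x => le_max_right x 0
  have hgm : ∀ s : ℝ, 0 ≤ s → gm s = g s := by
    intro s hs
    show g (max s 0) = g s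
    rw [max_eq_left hs]
  set fS : ℝ → EuclideanSpace ℝ (Fin n) :=
    fun s => (c s)⁻¹ • Ex (-s) (Ps (gm s)) with hfSdef
  set fU : ℝ → EuclideanSpace ℝ (Fin n) :=
    fun s => (c s)⁻¹ • Ex (-s) (Pu (gm s)) with hfUdef
  have hfScont : Continuous fS :=
    (hccont.inv₀ hcne).smul ((hExcont.comp continuous_neg).clm_apply (Ps.continuous.comp hgmc))
  have hfUcont : Continuous fU :=
    (hccont.inv₀ hcne).smul ((hExcont.comp continuous_neg).clm_apply (Pu.continuous.comp hgmc))
  -- integrability of fU on tails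
  have hIU : ∀ t ≥ (0:ℝ), IntegrableOn fU (Set.Ioi t) := by
    intro t ht
    have h1 := hInt t ht
    have h2 : IntegrableOn
        (fun s => (c t)⁻¹ • (Ex (-t)) (Real.exp (∫ r in s..t, z r) •
          (NormedSpace.exp ((t - s) • A)) (Pu (G s (ψ s + Φ s) - G s (Φ s)))))
        (Set.Ioi t) :=
      ((Ex (-t)).integrable_comp h1).smul ((c t)⁻¹)
    apply h2.congr_fun ?_ measurableSet_Ioi
    intro s hs
    have hs0 : (0:ℝ) ≤ s := le_trans ht (le_of_lt hs)
    have hsc : (c t)⁻¹ * Real.exp (∫ r in s..t, z r) = (c s)⁻¹ := by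
      rw [← hcdiv s t, inv_mul_cancel_left₀ (hcne t)]
    show (c t)⁻¹ • (Ex (-t)) (Real.exp (∫ r in s..t, z r) • Ex (t - s) (Pu (g s))) = fU s
    rw [_root_.map_smul, smul_smul, hsc, hexp2 (-t) (t - s) (Pu (g s)),
      show -t + (t - s) = -s by ring]
    show (c s)⁻¹ • Ex (-s) (Pu (g s)) = (c s)⁻¹ • Ex (-s) (Pu (gm s))
    rw [hgm s hs0]
  -- tail integral function
  set J : ℝ → EuclideanSpace ℝ (Fin n) := fun t => ∫ s in Set.Ioi t, fU s with hJdef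
  have hJsplit : ∀ a b : ℝ, 0 ≤ a → a ≤ b → J a = (∫ s in a..b, fU s) + J b := by
    intro a b ha hab
    have hu : Set.Ioc a b ∪ Set.Ioi b = Set.Ioi a := Set.Ioc_union_Ioi_eq_Ioi hab
    have hd : Disjoint (Set.Ioc a b) (Set.Ioi b) := Set.Ioc_disjoint_Ioi_same
    have hi1 : IntegrableOn fU (Set.Ioc a b) := (hfUcont.intervalIntegrable a b).1
    have hi2 : IntegrableOn fU (Set.Ioi b) := hIU b (le_trans ha hab)
    have key : (∫ s in Set.Ioc a b ∪ Set.Ioi b, fU s)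
        = (∫ s in Set.Ioc a b, fU s) + ∫ s in Set.Ioi b, fU s :=
      MeasureTheory.setIntegral_union hd measurableSet_Ioi hi1 hi2
    show (∫ s in Set.Ioi a, fU s) = (∫ s in a..b, fU s) + J b
    rw [← hu, key, intervalIntegral.integral_of_le hab]
  have hJ' : ∀ t ∈ Set.Ioi (0:ℝ), HasDerivAt J (-(fU t)) t := by
    intro t ht
    have h1 : HasDerivAt (fun u => J t - ∫ s in t..u, fU s) (-(fU t)) t := by
      simpa using ((hfUcont.integral_hasStrictDerivAt t t).hasDerivAt.const_sub (J t))
    apply h1.congr_of_eventuallyEq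
    filter_upwards [isOpen_Ioi.mem_nhds ht] with u hu
    rcases le_total t u with h | h
    · rw [eq_sub_iff_add_eq, hJsplit t u (le_of_lt ht) h]
      abel
    · rw [hJsplit u t (le_of_lt hu) h, intervalIntegral.integral_symm u t]
      abel
  set v : ℝ → EuclideanSpace ℝ (Fin n) :=
    fun t => ξ + (∫ s in (0:ℝ)..t, fS s) - J t with hvdef
  -- main identity
  have hmain : ∀ t ≥ (0:ℝ), ψ t = c t • Ex t (v t) := by
    intro t ht
    have hSc : c t • Ex t (∫ s in (0:ℝ)..t, fS s)
        = ∫ s in (0:ℝ)..t, Real.exp (∫ r in s..t, z r) • Ex (t - s) (Ps (g s)) := by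
      rw [← ContinuousLinearMap.intervalIntegral_comp_comm (Ex t)
        (hfScont.intervalIntegrable 0 t), ← intervalIntegral.integral_smul]
      apply intervalIntegral.integral_congr
      intro s hs
      rw [Set.uIcc_of_le ht] at hs
      show c t • Ex t (fS s) = _
      rw [hfSdef]
      show c t • Ex t ((c s)⁻¹ • Ex (-s) (Ps (gm s))) = _
      rw [hgm s hs.1, keyPt t s (Ps (g s))]
    have hUc : c t • Ex t (J t)
        = ∫ s in Set.Ioi t, Real.exp (∫ r in s..t, z r) • Ex (t - s) (Pu (g s)) := by
      show c t • Ex t (∫ s in Set.Ioi t, fU s) = _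
      rw [← ContinuousLinearMap.integral_comp_comm (Ex t) (hIU t ht),
        ← MeasureTheory.integral_smul]
      apply MeasureTheory.setIntegral_congr_fun measurableSet_Ioi
      intro s hs
      have hs0 : (0:ℝ) ≤ s := le_trans ht (le_of_lt hs)
      show c t • Ex t ((c s)⁻¹ • Ex (-s) (Pu (gm s))) = _
      rw [hgm s hs0, keyPt t s (Pu (g s))]
    calc ψ t = c t • Ex t ξ
          + (∫ s in (0:ℝ)..t, Real.exp (∫ r in s..t, z r) • Ex (t - s) (Ps (g s)))
          - ∫ s in Set.Ioi t, Real.exp (∫ r in s..t, z r) • Ex (t - s) (Pu (g s)) := heq t ht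
      _ = c t • Ex t ξ + c t • Ex t (∫ s in (0:ℝ)..t, fS s) - c t • Ex t (J t) := by
          rw [hSc, hUc]
      _ = c t • Ex t (v t) := by
          show _ = c t • Ex t (ξ + (∫ s in (0:ℝ)..t, fS s) - J t)
          rw [map_sub, map_add, smul_sub, smul_add]
  constructor
  · -- the differential equation
    intro t ht
    have ht0 : (0:ℝ) < t := ht
    have hv' : HasDerivAt v (fS t + fU t) t := by
      have h1 : HasDerivAt (fun u => ξ + ∫ s in (0:ℝ)..u, fS s) (fS t) t :=
        ((hfScont.integral_hasStrictDerivAt 0 t).hasDerivAt.const_add ξ)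
      have h2 := h1.sub (hJ' t ht)
      rw [sub_neg_eq_add] at h2; exact h2
    have hEv : HasDerivAt (fun u => Ex u (v u))
        ((A * Ex t) (v t) + (Ex t) (fS t + fU t)) t := (hEx' t).clm_apply hv'
    have hFull : HasDerivAt (fun u => c u • Ex u (v u))
        (c t • ((A * Ex t) (v t) + (Ex t) (fS t + fU t)) + (z t * c t) • Ex t (v t)) t :=
      (hc' t).smul hEv
    have hDer : HasDerivAt ψ
        (c t • ((A * Ex t) (v t) + (Ex t) (fS t + fU t)) + (z t * c t) • Ex t (v t)) t := by
      apply hFull.congr_of_eventuallyEq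
      filter_upwards [isOpen_Ioi.mem_nhds ht] with u hu
      exact hmain u (le_of_lt hu)
    have hψt : ψ t = c t • Ex t (v t) := hmain t (le_of_lt ht0)
    have e1 : (z t * c t) • Ex t (v t) = z t • ψ t := by rw [hψt, mul_smul]
    have e2 : c t • (A * Ex t) (v t) = A (ψ t) := by
      rw [hψt, ContinuousLinearMap.mul_apply, _root_.map_smul]
    have e3 : c t • (Ex t) (fS t + fU t) = G t (ψ t + Φ t) - G t (Φ t) := by
      have h4 : fS t + fU t = (c t)⁻¹ • Ex (-t) (g t) := by
        show (c t)⁻¹ • Ex (-t) (Ps (gm t)) + (c t)⁻¹ • Ex (-t) (Pu (gm t)) = _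
        rw [hgm t (le_of_lt ht0), ← smul_add, ← map_add, hsum (g t)]
      rw [h4, keyPt t t (g t), intervalIntegral.integral_same, Real.exp_zero, one_smul,
        sub_self, hEx0]
    have hval : c t • ((A * Ex t) (v t) + (Ex t) (fS t + fU t)) + (z t * c t) • Ex t (v t)
        = A (ψ t) + z t • ψ t + (G t (ψ t + Φ t) - G t (Φ t)) := by
      rw [smul_add, e2, e3, e1]
      abel
    rw [← hval]
    exact hDer
  · -- the initial condition
    have h0 : ψ 0 = Real.exp (∫ s in (0:ℝ)..(0:ℝ), z s) • Ex (0:ℝ) ξ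
        + (∫ s in (0:ℝ)..(0:ℝ), Real.exp (∫ r in s..(0:ℝ), z r) • Ex ((0:ℝ) - s) (Ps (g s)))
        - ∫ s in Set.Ioi (0:ℝ), Real.exp (∫ r in s..(0:ℝ), z r) • Ex ((0:ℝ) - s) (Pu (g s)) :=
      heq 0 le_rfl
    have hfst : Real.exp (∫ s in (0:ℝ)..(0:ℝ), z s) • Ex (0:ℝ) ξ = ξ := by
      rw [intervalIntegral.integral_same, Real.exp_zero, one_smul, hEx0]
    have hmid : (∫ s in (0:ℝ)..(0:ℝ), Real.exp (∫ r in s..(0:ℝ), z r) •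
        Ex ((0:ℝ) - s) (Ps (g s))) = 0 := intervalIntegral.integral_same
    rw [hfst, hmid, add_zero] at h0
    have hi : Integrable
        (fun s => Real.exp (∫ r in s..(0:ℝ), z r) • Ex ((0:ℝ) - s) (Pu (g s)))
        (MeasureTheory.volume.restrict (Set.Ioi (0:ℝ))) := hInt 0 le_rfl
    have hPsInt : Ps (∫ s in Set.Ioi (0:ℝ), Real.exp (∫ r in s..(0:ℝ), z r) •
        Ex ((0:ℝ) - s) (Pu (g s))) = 0 := by
      rw [← ContinuousLinearMap.integral_comp_comm Ps hi]
      have hz0 : ∀ s : ℝ,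
          Ps (Real.exp (∫ r in s..(0:ℝ), z r) • Ex ((0:ℝ) - s) (Pu (g s))) = 0 := by
        intro s
        rw [_root_.map_smul, ← hExPs, hPsPu, map_zero, smul_zero]
      simp only [hz0]
      exact MeasureTheory.integral_zero _ _
    rw [h0, map_sub, hPsInt, sub_zero]
    obtain ⟨y, hy⟩ := hξ
    rw [← hy]
    exact hPsPs y
end

section
/- Let A be a continuous linear map on ℝⁿ and let Pˢ, Pᵘ be complementary continuous projections commuting with e^{At} for all t, such that e^{At} restricted to the range of Pᵘ is invertible for all t, and such that there are constants K > 0 and α > 0 with ‖e^{At} Pᵘ x‖ ≤ K e^{αt}‖x‖ for t ≤ 0. Let F : ℝⁿ → ℝⁿ be Lipschitz continuous, Φ : [0,∞) → ℝⁿ continuous, and let ψ : [0,∞) → ℝⁿ be a differentiable solution of ψ'(t) = A ψ(t) + F(Φ(t) + ψ(t)) − F(Φ(t)) with sup_{t ≥ 0} e^{−ηt}‖ψ(t)‖ < ∞ for some η < α. Then for every t ≥ 0 the integral ∫_t^∞ e^{A(t−s)} Pᵘ [F(Φ(s)+ψ(s)) − F(Φ(s))] ds converges absolutely and Pᵘ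 ψ(t) = − ∫_t^∞ e^{A(t−s)} Pᵘ [F(Φ(s)+ψ(s)) − F(Φ(s))] ds; in particular Pᵘ ψ(0) = − ∫_0^∞ e^{−As} Pᵘ [F(Φ(s)+ψ(s)) − F(Φ(s))] ds. -/
open MeasureTheory Filter

set_option maxHeartbeats 1000000 in
/-- Deterministic leaf formula: the unstable component of a tempered solution
of `ψ' = A ψ + F(Φ + ψ) - F(Φ)` is given by the Lyapunov–Perron integral. -/
theorem unstable_component_integral_formula
    {n : ℕ} (A : EuclideanSpace ℝ (Fin n) →L[ℝ] EuclideanSpace ℝ (Fin n))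
    (Ps Pu : EuclideanSpace ℝ (Fin n) →L[ℝ] EuclideanSpace ℝ (Fin n))
    (hPs : Ps.comp Ps = Ps) (hPu : Pu.comp Pu = Pu)
    (hcompl : Ps + Pu = ContinuousLinearMap.id ℝ (EuclideanSpace ℝ (Fin n)))
    (hcomm : ∀ t : ℝ, (NormedSpace.exp (t • A)).comp Pu
      = Pu.comp (NormedSpace.exp (t • A)))
    (hbij : ∀ t : ℝ,
      Set.BijOn (fun x => NormedSpace.exp (t • A) x) (Set.range Pu) (Set.range Pu))
    (K α : ℝ) (hK : 0 < K) (hα : 0 < α)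
    (hdichU : ∀ t ≤ (0:ℝ), ∀ x,
      ‖NormedSpace.exp (t • A) (Pu x)‖ ≤ K * Real.exp (α * t) * ‖x‖)
    (F : EuclideanSpace ℝ (Fin n) → EuclideanSpace ℝ (Fin n))
    (LF : ℝ) (hFLip : LipschitzWith (Real.toNNReal LF) F)
    (Φ : ℝ → EuclideanSpace ℝ (Fin n)) (hΦ : ContinuousOn Φ (Set.Ici 0))
    (ψ : ℝ → EuclideanSpace ℝ (Fin n))
    (hψ : ∀ t ≥ (0:ℝ),
      HasDerivAt ψ (A (ψ t) + (F (Φ t + ψ t) - F (Φ t))) t)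
    (η : ℝ) (hη : η < α)
    (hψbdd : ∃ M : ℝ, ∀ t ≥ (0:ℝ), Real.exp (-(η * t)) * ‖ψ t‖ ≤ M) :
    (∀ t ≥ (0:ℝ),
      IntegrableOn
        (fun s => (NormedSpace.exp ((t - s) • A)) (Pu (F (Φ s + ψ s) - F (Φ s))))
        (Set.Ioi t)
      ∧ Pu (ψ t) = -∫ s in Set.Ioi t,
          (NormedSpace.exp ((t - s) • A)) (Pu (F (Φ s + ψ s) - F (Φ s))))
    ∧ Pu (ψ 0) = -∫ s in Set.Ioi (0:ℝ),
        (NormedSpace.exp ((-s) • A)) (Pu (F (Φ s + ψ s) - F (Φ s))) := by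
  obtain ⟨M, hM⟩ := hψbdd
  set L : ℝ := (Real.toNNReal LF : ℝ) with hLdef
  have hL0 : (0:ℝ) ≤ L := (Real.toNNReal LF).2
  have hM0 : (0:ℝ) ≤ M := by
    have h := hM 0 le_rfl
    simp at h
    exact le_trans (norm_nonneg _) h
  set g : ℝ → EuclideanSpace ℝ (Fin n) := fun s => F (Φ s + ψ s) - F (Φ s) with hgdef
  -- basic bounds
  have hψnorm : ∀ s ≥ (0:ℝ), ‖ψ s‖ ≤ M * Real.exp (η * s) := by
    intro s hs
    have h := hM s hs
    have h2 : Real.exp (η * s) * (Real.exp (-(η * s)) * ‖ψ s‖)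
        ≤ Real.exp (η * s) * M := mul_le_mul_of_nonneg_left h (Real.exp_pos _).le
    calc ‖ψ s‖ = Real.exp (η * s) * (Real.exp (-(η * s)) * ‖ψ s‖) := by
          rw [← mul_assoc, ← Real.exp_add]; simp
      _ ≤ Real.exp (η * s) * M := h2
      _ = M * Real.exp (η * s) := mul_comm _ _
  have hgnorm : ∀ s, ‖g s‖ ≤ L * ‖ψ s‖ := by
    intro s
    have := hFLip.dist_le_mul (Φ s + ψ s) (Φ s)
    simpa [hgdef, dist_eq_norm, add_sub_cancel_left, hLdef] using this
  -- continuity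
  have hψcont : ContinuousOn ψ (Set.Ici 0) := fun s hs =>
    ((hψ s hs).continuousAt).continuousWithinAt
  have hgcont : ContinuousOn g (Set.Ici 0) :=
    (hFLip.continuous.comp_continuousOn (hΦ.add hψcont)).sub
      (hFLip.continuous.comp_continuousOn hΦ)
  -- commutation of A with Pu
  have hAPu : ∀ x, A (Pu x) = Pu (A x) := by
    intro x
    have hp : HasDerivAt (fun u : ℝ => NormedSpace.exp (u • A) (Pu x)) (A (Pu x)) 0 := by
      have h1 := (hasDerivAt_exp_smul_const (𝕂 := ℝ) A (0:ℝ)).clm_apply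
        (hasDerivAt_const (0:ℝ) (Pu x))
      simpa [NormedSpace.exp_zero, zero_smul ℝ A] using h1
    have hq : HasDerivAt (fun u : ℝ => Pu (NormedSpace.exp (u • A) x)) (Pu (A x)) 0 := by
      have h1 := (hasDerivAt_exp_smul_const (𝕂 := ℝ) A (0:ℝ)).clm_apply
        (hasDerivAt_const (0:ℝ) x)
      have h2 := Pu.hasFDerivAt.comp_hasDerivAt 0 h1
      exact (by simpa [NormedSpace.exp_zero, zero_smul ℝ A] using h2 :
        HasDerivAt (⇑Pu ∘ fun y : ℝ => NormedSpace.exp (y • A) x) (Pu (A x)) 0)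
    have hpq : (fun u : ℝ => NormedSpace.exp (u • A) (Pu x))
        = fun u : ℝ => Pu (NormedSpace.exp (u • A) x) := by
      funext u; exact DFunLike.congr_fun (hcomm u) x
    rw [hpq] at hp
    exact hp.unique hq
  -- main claim for each t ≥ 0
  have main : ∀ t ≥ (0:ℝ),
      IntegrableOn (fun s => (NormedSpace.exp ((t - s) • A)) (Pu (g s))) (Set.Ioi t)
      ∧ Pu (ψ t) = -∫ s in Set.Ioi t, (NormedSpace.exp ((t - s) • A)) (Pu (g s)) := by
    intro t ht
    set f : ℝ → EuclideanSpace ℝ (Fin n) :=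
      fun s => (NormedSpace.exp ((t - s) • A)) (Pu (g s)) with hfdef
    -- continuity of the integrand on [t, ∞)
    have hexpc : Continuous fun s : ℝ => NormedSpace.exp ((t - s) • A) :=
      (continuous_iff_continuousAt.2 fun x => (NormedSpace.exp_analytic (𝕂 := ℝ) x).continuousAt).comp ((continuous_const.sub continuous_id).smul continuous_const)
    have hIcisub : Set.Ici t ⊆ Set.Ici (0:ℝ) := Set.Ici_subset_Ici.2 ht
    have hfcont : ContinuousOn f (Set.Ici t) :=
      hexpc.continuousOn.clm_apply (Pu.continuous.comp_continuousOn (hgcont.mono hIcisub))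
    -- norm bound of the integrand
    have hfbound : ∀ s ≥ t, ‖f s‖ ≤ (K * L * M * Real.exp (α * t)) * Real.exp (-(α - η) * s) := by
      intro s hs
      have hs0 : (0:ℝ) ≤ s := le_trans ht hs
      have h1 : ‖f s‖ ≤ K * Real.exp (α * (t - s)) * ‖g s‖ :=
        hdichU (t - s) (by linarith) (g s)
      have h2 : ‖g s‖ ≤ L * (M * Real.exp (η * s)) := by
        refine le_trans (hgnorm s) ?_
        exact mul_le_mul_of_nonneg_left (hψnorm s hs0) hL0
      have h3 : ‖f s‖ ≤ K * Real.exp (α * (t - s)) * (L * (M * Real.exp (η * s))) :=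
        le_trans h1 (mul_le_mul_of_nonneg_left h2 (by positivity))
      have hexp : Real.exp (α * (t - s)) * Real.exp (η * s)
          = Real.exp (α * t) * Real.exp (-(α - η) * s) := by
        rw [← Real.exp_add, ← Real.exp_add]; ring_nf
      calc ‖f s‖ ≤ K * Real.exp (α * (t - s)) * (L * (M * Real.exp (η * s))) := h3
        _ = (K * L * M * Real.exp (α * t)) * Real.exp (-(α - η) * s) := by
            linear_combination (K * L * M) * hexp
    -- integrability
    have hbnd_int : IntegrableOn
        (fun s => (K * L * M * Real.exp (α * t)) * Real.exp (-(α - η) * s)) (Set.Ioi t) :=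
      (exp_neg_integrableOn_Ioi t (by linarith : (0:ℝ) < α - η)).const_mul _
    have hfmeas : AEStronglyMeasurable f (volume.restrict (Set.Ioi t)) :=
      (hfcont.mono Set.Ioi_subset_Ici_self).aestronglyMeasurable measurableSet_Ioi
    have hInt : IntegrableOn f (Set.Ioi t) := by
      refine Integrable.mono' hbnd_int hfmeas ?_
      refine (ae_restrict_iff' measurableSet_Ioi).2 (Filter.Eventually.of_forall ?_)
      exact fun s hs => hfbound s (le_of_lt hs)
    refine ⟨hInt, ?_⟩
    -- fundamental theorem of calculus on [t, T]
    set Ft : ℝ → EuclideanSpace ℝ (Fin n) :=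
      fun s => (NormedSpace.exp ((t - s) • A)) (Pu (ψ s)) with hFtdef
    have hFt' : ∀ s ≥ (0:ℝ), HasDerivAt Ft (f s) s := by
      intro s hs
      have hts : HasDerivAt (fun x : ℝ => t - x) (-1) s := (hasDerivAt_id s).const_sub t
      have hB0 := hasDerivAt_exp_smul_const (𝕂 := ℝ) A (t - s)
      have hB : HasDerivAt (fun x : ℝ => NormedSpace.exp ((t - x) • A))
          ((-1 : ℝ) • (NormedSpace.exp ((t - s) • A) * A)) s := hB0.scomp s hts
      have hu : HasDerivAt (fun x => Pu (ψ x)) (Pu (A (ψ s) + g s)) s :=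
        Pu.hasFDerivAt.comp_hasDerivAt s (hψ s hs)
      have hcomb := hB.clm_apply hu
      have heq : ((-1 : ℝ) • (NormedSpace.exp ((t - s) • A) * A)) (Pu (ψ s))
          + (NormedSpace.exp ((t - s) • A)) (Pu (A (ψ s) + g s)) = f s := by
        have h1 : (NormedSpace.exp ((t - s) • A) * A) (Pu (ψ s))
            = (NormedSpace.exp ((t - s) • A)) (A (Pu (ψ s))) := rfl
        rw [map_add]
        rw [ContinuousLinearMap.smul_apply, h1, hAPu]
        simp [hfdef]
      rw [heq] at hcomb
      exact hcomb
    have hFTC : ∀ T ≥ t, (∫ s in t..T, f s) = Ft T - Pu (ψ t) := by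
      intro T hT
      have hderiv : ∀ s ∈ Set.uIcc t T, HasDerivAt Ft (f s) s := by
        intro s hsmem
        rw [Set.uIcc_of_le hT] at hsmem
        exact hFt' s (le_trans ht hsmem.1)
      have hii : IntervalIntegrable f volume t T := by
        apply ContinuousOn.intervalIntegrable
        refine hfcont.mono ?_
        rw [Set.uIcc_of_le hT]
        exact fun x hx => hx.1
      have := intervalIntegral.integral_eq_sub_of_hasDerivAt hderiv hii
      rw [this]
      have : Ft t = Pu (ψ t) := by
        show (NormedSpace.exp ((t - t) • A)) (Pu (ψ t)) = Pu (ψ t)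
        rw [sub_self, zero_smul ℝ A, NormedSpace.exp_zero, ContinuousLinearMap.one_apply]
      rw [this]
    -- limits
    have hlim1 : Tendsto (fun T => ∫ s in t..T, f s) atTop
        (nhds (∫ s in Set.Ioi t, f s)) :=
      intervalIntegral_tendsto_integral_Ioi t hInt tendsto_id
    have hFtlim : Tendsto Ft atTop (nhds 0) := by
      have hbound : ∀ᶠ T in atTop,
          ‖Ft T‖ ≤ (K * M * Real.exp (α * t)) * Real.exp (-(α - η) * T) := by
        filter_upwards [eventually_ge_atTop t] with T hT
        have hT0 : (0:ℝ) ≤ T := le_trans ht hT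
        have h1 : ‖Ft T‖ ≤ K * Real.exp (α * (t - T)) * ‖ψ T‖ :=
          hdichU (t - T) (by linarith) (ψ T)
        have h2 : ‖Ft T‖ ≤ K * Real.exp (α * (t - T)) * (M * Real.exp (η * T)) :=
          le_trans h1 (mul_le_mul_of_nonneg_left (hψnorm T hT0) (by positivity))
        have hexp : Real.exp (α * (t - T)) * Real.exp (η * T)
            = Real.exp (α * t) * Real.exp (-(α - η) * T) := by
          rw [← Real.exp_add, ← Real.exp_add]; ring_nf
        calc ‖Ft T‖ ≤ K * Real.exp (α * (t - T)) * (M * Real.exp (η * T)) := h2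
          _ = (K * M * Real.exp (α * t)) * Real.exp (-(α - η) * T) := by
            linear_combination (K * M) * hexp
      have hgz : Tendsto (fun T : ℝ => (K * M * Real.exp (α * t)) * Real.exp (-(α - η) * T))
          atTop (nhds 0) := by
        have h1 : Tendsto (fun T : ℝ => -(α - η) * T) atTop atBot :=
          Tendsto.const_mul_atTop_of_neg (by linarith) tendsto_id
        have h2 : Tendsto (fun T : ℝ => Real.exp (-(α - η) * T)) atTop (nhds 0) :=
          Real.tendsto_exp_atBot.comp h1
        have := h2.const_mul (K * M * Real.exp (α * t))
        simpa using this
      exact squeeze_zero_norm' hbound hgz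
    have hlim2 : Tendsto (fun T => ∫ s in t..T, f s) atTop (nhds (0 - Pu (ψ t))) := by
      have : Tendsto (fun T => Ft T - Pu (ψ t)) atTop (nhds (0 - Pu (ψ t))) :=
        hFtlim.sub tendsto_const_nhds
      refine this.congr' ?_
      filter_upwards [eventually_ge_atTop t] with T hT
      exact (hFTC T hT).symm
    have := tendsto_nhds_unique hlim1 hlim2
    rw [this]
    simp
  refine ⟨main, ?_⟩
  have h0 := (main 0 le_rfl).2
  simp only [zero_sub] at h0
  exact h0
end

section
/- Let A be a continuous linear map on ℝⁿ and let Pˢ, Pᵘ be complementary continuous projections commuting with e^{At} for all t, such that e^{At} restricted to the range of Pᵘ is invertible for all t, and with constants K > 0, α > 0 > β such that ‖e^{At} Pᵘ x‖ ≤ K e^{αt}‖x‖ for t ≤ 0 and ‖e^{At} Pˢ x‖ ≤ K e^{βt}‖x‖ for t ≥ 0. Let z : ℝ → ℝ be continuous with δ := sup_t |z(t)| satisfying β + δ < η < α − δ for some η, let G : [0,∞) × ℝⁿ → ℝⁿ be continuous and Lipschitz in its second variable, and Φ : [0,∞) → ℝⁿ continuous. If ψ : [0,∞) → ℝⁿ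 is a differentiable solution of ψ'(t) = A ψ(t) + z(t) ψ(t) + G(t, ψ(t)+Φ(t)) − G(t, Φ(t)) with sup_{t ≥ 0} e^{−ηt − ∫₀ᵗ z(τ)dτ}‖ψ(t)‖ < ∞, then ψ satisfies, for all t ≥ 0, ψ(t) = e^{At + ∫₀ᵗ z(s)ds} Pˢψ(0) + ∫₀ᵗ e^{A(t−s) + ∫ₛᵗ z(r)dr} Pˢ [G(s, ψ(s)+Φ(s)) − G(s, Φ(s))] ds − ∫_t^∞ e^{A(t−s) + ∫ₛᵗ z(r)dr} Pᵘ [G(s, ψ(s)+Φ(s)) − G(s, Φ(s))] ds, with all integrals absolutely convergent. -/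
open MeasureTheory

set_option maxHeartbeats 4000000 in
/-- Converse Lyapunov–Perron characterization: a tempered solution of
`ψ' = A ψ + z(t) ψ + G(t, ψ + Φ) - G(t, Φ)` satisfies the Lyapunov–Perron
integral equation with `ξ = Pˢ ψ(0)`. -/
theorem ode_implies_lyapunov_perron
    {n : ℕ} (A : EuclideanSpace ℝ (Fin n) →L[ℝ] EuclideanSpace ℝ (Fin n))
    (Ps Pu : EuclideanSpace ℝ (Fin n) →L[ℝ] EuclideanSpace ℝ (Fin n))
    (hPs : Ps.comp Ps = Ps) (hPu : Pu.comp Pu = Pu)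
    (hcompl : Ps + Pu = ContinuousLinearMap.id ℝ (EuclideanSpace ℝ (Fin n)))
    (hcomm : ∀ t : ℝ, (NormedSpace.exp (t • A)).comp Pu
      = Pu.comp (NormedSpace.exp (t • A)))
    (hbij : ∀ t : ℝ,
      Set.BijOn (fun x => NormedSpace.exp (t • A) x) (Set.range Pu) (Set.range Pu))
    (K α β : ℝ) (hK : 0 < K) (hα : 0 < α) (hβ : β < 0)
    (hdichU : ∀ t ≤ (0:ℝ), ∀ x,
      ‖NormedSpace.exp (t • A) (Pu x)‖ ≤ K * Real.exp (α * t) * ‖x‖)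
    (hdichS : ∀ t ≥ (0:ℝ), ∀ x,
      ‖NormedSpace.exp (t • A) (Ps x)‖ ≤ K * Real.exp (β * t) * ‖x‖)
    (z : ℝ → ℝ) (hz : Continuous z)
    (δ η : ℝ) (hδ : ∀ t : ℝ, |z t| ≤ δ)
    (hη₁ : β + δ < η) (hη₂ : η < α - δ)
    (G : ℝ → EuclideanSpace ℝ (Fin n) → EuclideanSpace ℝ (Fin n))
    (hGcont : ContinuousOn (fun p : ℝ × EuclideanSpace ℝ (Fin n) => G p.1 p.2)
      (Set.Ici 0 ×ˢ Set.univ))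
    (L : ℝ) (hGLip : ∀ t ∈ Set.Ici (0:ℝ), ∀ x y, ‖G t x - G t y‖ ≤ L * ‖x - y‖)
    (Φ : ℝ → EuclideanSpace ℝ (Fin n)) (hΦ : ContinuousOn Φ (Set.Ici 0))
    (ψ : ℝ → EuclideanSpace ℝ (Fin n))
    (hψode : ∀ t ≥ (0:ℝ),
      HasDerivAt ψ (A (ψ t) + z t • ψ t + (G t (ψ t + Φ t) - G t (Φ t))) t)
    (hψbdd : ∃ M : ℝ, ∀ t ≥ (0:ℝ),
      Real.exp (-(η * t) - ∫ τ in (0:ℝ)..t, z τ) * ‖ψ t‖ ≤ M) :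
    ∀ t ≥ (0:ℝ),
      IntervalIntegrable
        (fun s => Real.exp (∫ r in s..t, z r) •
          (NormedSpace.exp ((t - s) • A)) (Ps (G s (ψ s + Φ s) - G s (Φ s))))
        MeasureTheory.volume 0 t
      ∧ IntegrableOn
          (fun s => Real.exp (∫ r in s..t, z r) •
            (NormedSpace.exp ((t - s) • A)) (Pu (G s (ψ s + Φ s) - G s (Φ s))))
          (Set.Ioi t)
      ∧ ψ t = Real.exp (∫ s in (0:ℝ)..t, z s) • (NormedSpace.exp (t • A)) (Ps (ψ 0))
          + (∫ s in (0:ℝ)..t, Real.exp (∫ r in s..t, z r) •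
              (NormedSpace.exp ((t - s) • A)) (Ps (G s (ψ s + Φ s) - G s (Φ s))))
          - ∫ s in Set.Ioi t, Real.exp (∫ r in s..t, z r) •
              (NormedSpace.exp ((t - s) • A)) (Pu (G s (ψ s + Φ s) - G s (Φ s))) := by
  intro t ht
  letI : NormedAlgebra ℚ (EuclideanSpace ℝ (Fin n) →L[ℝ] EuclideanSpace ℝ (Fin n)) :=
    NormedAlgebra.restrictScalars ℚ ℝ _
  obtain ⟨M, hM⟩ := hψbdd
  set g : ℝ → EuclideanSpace ℝ (Fin n) := fun s => G s (ψ s + Φ s) - G s (Φ s) with hgdef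
  set zI : ℝ → ℝ := fun s => ∫ τ in (0:ℝ)..s, z τ with hzIdef
  -- basic facts about zI
  have hzInt : ∀ a b : ℝ, IntervalIntegrable z volume a b := fun a b =>
    hz.intervalIntegrable a b
  have hzI_deriv : ∀ s : ℝ, HasDerivAt zI (z s) s := fun s =>
    intervalIntegral.integral_hasDerivAt_right (hzInt 0 s)
      (hz.stronglyMeasurableAtFilter _ _) hz.continuousAt
  have hzIcont : Continuous zI :=
    continuous_iff_continuousAt.mpr fun s => (hzI_deriv s).continuousAt
  have hsplit : ∀ s : ℝ, (∫ r in s..t, z r) = zI t - zI s := fun s =>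
    eq_sub_of_add_eq' (intervalIntegral.integral_add_adjacent_intervals (hzInt 0 s) (hzInt s t))
  -- exponential group law
  have hgrp : ∀ a b : ℝ,
      NormedSpace.exp (a • A) * NormedSpace.exp (b • A) = NormedSpace.exp ((a + b) • A) := by
    intro a b
    rw [add_smul a b A]
    refine (NormedSpace.exp_add_of_commute ?_).symm
    unfold Commute SemiconjBy
    refine ContinuousLinearMap.ext fun x => ?_
    simp only [ContinuousLinearMap.mul_apply, ContinuousLinearMap.smul_apply,
      _root_.map_smul, smul_smul, mul_comm a b]
  have hexp0 : NormedSpace.exp ((0:ℝ) • A) = 1 := by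
    rw [show (0:ℝ) • A = 0 from zero_smul ℝ A, NormedSpace.exp_zero]
  -- pointwise commutation
  have hcomm' : ∀ s : ℝ, ∀ x, NormedSpace.exp (s • A) (Pu x)
      = Pu (NormedSpace.exp (s • A) x) := by
    intro s x
    have h := congrArg
      (fun (T : EuclideanSpace ℝ (Fin n) →L[ℝ] EuclideanSpace ℝ (Fin n)) => T x) (hcomm s)
    simpa using h
  have hid : ∀ x : EuclideanSpace ℝ (Fin n), Ps x + Pu x = x := by
    intro x
    have h := congrArg
      (fun (T : EuclideanSpace ℝ (Fin n) →L[ℝ] EuclideanSpace ℝ (Fin n)) => T x) hcompl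
    simpa using h
  have hcommS : ∀ s : ℝ, ∀ x, NormedSpace.exp (s • A) (Ps x)
      = Ps (NormedSpace.exp (s • A) x) := by
    intro s x
    have h1 : Ps x = x - Pu x := by
      have := hid x; linear_combination (norm := module) this
    have h2 : Ps (NormedSpace.exp (s • A) x)
        = NormedSpace.exp (s • A) x - Pu (NormedSpace.exp (s • A) x) := by
      have := hid (NormedSpace.exp (s • A) x); linear_combination (norm := module) this
    rw [h1, h2, _root_.map_sub, hcomm' s x]
  -- continuity of ψ and g
  have hψcont : ContinuousOn ψ (Set.Ici 0) := fun s hs =>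
    ((hψode s hs).continuousAt).continuousWithinAt
  have hgcont : ContinuousOn g (Set.Ici 0) := by
    have h1 : ContinuousOn (fun s => G s (ψ s + Φ s)) (Set.Ici 0) := by
      refine hGcont.comp (continuousOn_id.prodMk (hψcont.add hΦ)) ?_
      intro s hs; exact ⟨hs, trivial⟩
    have h2 : ContinuousOn (fun s => G s (Φ s)) (Set.Ici 0) := by
      refine hGcont.comp (continuousOn_id.prodMk hΦ) ?_
      intro s hs; exact ⟨hs, trivial⟩
    exact h1.sub h2
  -- norm bounds
  have hM0 : (0:ℝ) ≤ M := le_trans (by positivity) (hM 0 le_rfl)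
  have hψnorm : ∀ s : ℝ, 0 ≤ s → ‖ψ s‖ ≤ M * Real.exp (η * s + zI s) := by
    intro s hs
    have h := hM s hs
    have he : (η * s + zI s) + (-(η * s) - zI s) = 0 := by ring
    calc ‖ψ s‖ = Real.exp (η * s + zI s) * (Real.exp (-(η * s) - zI s) * ‖ψ s‖) := by
          rw [← mul_assoc, ← Real.exp_add, he, Real.exp_zero, one_mul]
      _ ≤ Real.exp (η * s + zI s) * M :=
          mul_le_mul_of_nonneg_left h (Real.exp_pos _).le
      _ = M * Real.exp (η * s + zI s) := mul_comm _ _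
  set L' : ℝ := max L 0 with hL'def
  have hL'0 : (0:ℝ) ≤ L' := le_max_right _ _
  have hgnorm : ∀ s : ℝ, 0 ≤ s → ‖g s‖ ≤ L' * (M * Real.exp (η * s + zI s)) := by
    intro s hs
    have h1 : ‖g s‖ ≤ L * ‖ψ s‖ := by
      have h := hGLip s hs (ψ s + Φ s) (Φ s)
      simpa [hgdef, add_sub_cancel_right] using h
    have h2 : L * ‖ψ s‖ ≤ L' * ‖ψ s‖ :=
      mul_le_mul_of_nonneg_right (le_max_left _ _) (norm_nonneg _)
    have h3 : L' * ‖ψ s‖ ≤ L' * (M * Real.exp (η * s + zI s)) :=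
      mul_le_mul_of_nonneg_left (hψnorm s hs) hL'0
    linarith
  -- the transformed function F and its derivative
  set F : ℝ → EuclideanSpace ℝ (Fin n) :=
    fun s => Real.exp (-(zI s)) • (NormedSpace.exp ((-s) • A)) (ψ s) with hFdef
  set F' : ℝ → EuclideanSpace ℝ (Fin n) :=
    fun s => Real.exp (-(zI s)) • (NormedSpace.exp ((-s) • A)) (g s) with hF'def
  have hFderiv : ∀ s : ℝ, 0 ≤ s → HasDerivAt F (F' s) s := by
    intro s hs
    have hc : HasDerivAt (fun u => Real.exp (-(zI u))) (Real.exp (-(zI s)) * (-(z s))) s :=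
      ((hzI_deriv s).neg).exp
    have hB : HasDerivAt (fun u : ℝ => NormedSpace.exp ((-u) • A))
        (NormedSpace.exp ((-s) • A) * (-A)) s := by
      have hABneg : ∀ u : ℝ, u • (-A) = (-u) • A := fun u => by
        rw [smul_neg, ← neg_smul]
      have h1 := hasDerivAt_exp_smul_const (𝕂 := ℝ) (-A) s
      simp only [hABneg] at h1
      exact h1
    have hBψ := hB.clm_apply (hψode s hs)
    have h := hc.smul hBψ
    refine HasDerivAt.congr_deriv h ?_
    simp only [hF'def, hgdef, ContinuousLinearMap.smul_apply, ContinuousLinearMap.mul_apply,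
      _root_.map_add, _root_.map_smul, map_neg, neg_smul, one_smul,
      ContinuousLinearMap.add_apply, ContinuousLinearMap.neg_apply, smul_smul]
    module
  -- continuity of F'
  have hF'cont : ContinuousOn F' (Set.Ici 0) := by
    refine ContinuousOn.smul ((Real.continuous_exp.comp hzIcont.neg).continuousOn) ?_
    refine ContinuousOn.clm_apply ?_ hgcont
    exact (NormedSpace.exp_continuous.comp (continuous_neg.smul continuous_const)).continuousOn
  have hF'int : ∀ a b : ℝ, 0 ≤ a → a ≤ b → IntervalIntegrable F' volume a b := by
    intro a b ha hab
    have hsub : Set.uIcc a b ⊆ Set.Ici 0 := by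
      rw [Set.uIcc_of_le hab]
      exact fun x hx => le_trans ha hx.1
    exact (hF'cont.mono hsub).intervalIntegrable
  -- fundamental theorem of calculus
  have hFTC : ∀ a b : ℝ, 0 ≤ a → a ≤ b → (∫ s in a..b, F' s) = F b - F a := by
    intro a b ha hab
    have hsub : Set.uIcc a b ⊆ Set.Ici 0 := by
      rw [Set.uIcc_of_le hab]
      exact fun x hx => le_trans ha hx.1
    exact intervalIntegral.integral_eq_sub_of_hasDerivAt
      (fun x hx => hFderiv x (hsub hx)) ((hF'cont.mono hsub).intervalIntegrable)
  -- reconstruction of ψ from F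
  have hrec : ∀ s : ℝ, ψ s = Real.exp (zI s) • (NormedSpace.exp (s • A)) (F s) := by
    intro s
    simp only [hFdef]
    rw [_root_.map_smul, smul_smul, ← Real.exp_add, add_neg_cancel, Real.exp_zero, one_smul]
    rw [show NormedSpace.exp (s • A) ((NormedSpace.exp ((-s) • A)) (ψ s))
        = (NormedSpace.exp (s • A) * NormedSpace.exp ((-s) • A)) (ψ s) from rfl]
    rw [hgrp, add_neg_cancel, hexp0, ContinuousLinearMap.one_apply]
  -- pointwise identity for the integrands
  have hpoint : ∀ (P : EuclideanSpace ℝ (Fin n) →L[ℝ] EuclideanSpace ℝ (Fin n)),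
      (∀ a : ℝ, ∀ x, NormedSpace.exp (a • A) (P x) = P (NormedSpace.exp (a • A) x)) →
      ∀ s : ℝ, Real.exp (zI t) • P ((NormedSpace.exp (t • A)) (F' s))
        = Real.exp (zI t - zI s) • (NormedSpace.exp ((t - s) • A)) (P (g s)) := by
    intro P hP s
    simp only [hF'def]
    rw [_root_.map_smul, _root_.map_smul, smul_smul, ← Real.exp_add,
      show zI t + -zI s = zI t - zI s from by ring,
      ← hP t ((NormedSpace.exp ((-s) • A)) (g s)), ← hP (-s) (g s),
      show NormedSpace.exp (t • A) ((NormedSpace.exp ((-s) • A)) (P (g s)))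
          = (NormedSpace.exp (t • A) * NormedSpace.exp ((-s) • A)) (P (g s)) from rfl,
      hgrp, show t + -s = t - s from by ring]
  have hF0 : F 0 = ψ 0 := by
    have h1 : zI 0 = 0 := intervalIntegral.integral_same
    simp only [hFdef, h1, neg_zero, Real.exp_zero, one_smul,
      show (-(0:ℝ)) • A = 0 from by rw [neg_zero]; exact zero_smul ℝ A,
      show (0:ℝ) • A = 0 from zero_smul ℝ A,
      NormedSpace.exp_zero, ContinuousLinearMap.one_apply]
  have hPψ : ∀ (P : EuclideanSpace ℝ (Fin n) →L[ℝ] EuclideanSpace ℝ (Fin n)),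
      P (ψ t) = Real.exp (zI t) • P ((NormedSpace.exp (t • A)) (F t)) := by
    intro P
    conv_lhs => rw [hrec t]
    rw [_root_.map_smul]
  have hLint : ∀ (P : EuclideanSpace ℝ (Fin n) →L[ℝ] EuclideanSpace ℝ (Fin n))
      (a b : ℝ), 0 ≤ a → a ≤ b →
      P ((NormedSpace.exp (t • A)) (∫ s in a..b, F' s))
        = ∫ s in a..b, P ((NormedSpace.exp (t • A)) (F' s)) := by
    intro P a b ha hab
    exact ((P.comp (NormedSpace.exp (t • A))).intervalIntegral_comp_comm
      (hF'int a b ha hab)).symm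
  -- the stable part
  have hstable : Ps (ψ t) = Real.exp (zI t) • (NormedSpace.exp (t • A)) (Ps (ψ 0))
      + ∫ s in (0:ℝ)..t, Real.exp (zI t - zI s) •
          (NormedSpace.exp ((t - s) • A)) (Ps (g s)) := by
    have h0 : F t = F 0 + ∫ s in (0:ℝ)..t, F' s := by
      rw [hFTC 0 t le_rfl ht]; abel
    rw [hPψ Ps, h0, hF0, _root_.map_add, _root_.map_add, smul_add]
    congr 1
    · rw [hcommS t (ψ 0)]
    · rw [hLint Ps 0 t le_rfl ht, ← intervalIntegral.integral_smul]
      exact intervalIntegral.integral_congr fun s _ => hpoint Ps hcommS s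
  -- the unstable part: finite-time identity
  have hunstT : ∀ T : ℝ, t ≤ T →
      Pu (ψ t) = Real.exp (zI t) • Pu ((NormedSpace.exp (t • A)) (F T))
        - ∫ s in t..T, Real.exp (zI t - zI s) •
            (NormedSpace.exp ((t - s) • A)) (Pu (g s)) := by
    intro T hT
    have hFt : F t = F T - ∫ s in t..T, F' s := by
      rw [hFTC t T ht hT]; abel
    rw [hPψ Pu, hFt, _root_.map_sub, _root_.map_sub, smul_sub]
    congr 1
    rw [hLint Pu t T ht hT, ← intervalIntegral.integral_smul]
    exact intervalIntegral.integral_congr fun s _ => hpoint Pu hcomm' s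
  -- norm bound on the unstable integrand
  have hHnorm : ∀ s : ℝ, t ≤ s →
      ‖Real.exp (zI t - zI s) • (NormedSpace.exp ((t - s) • A)) (Pu (g s))‖
        ≤ (K * L' * M * Real.exp (zI t + α * t)) * Real.exp ((η - α) * s) := by
    intro s hs
    have hs0 : (0:ℝ) ≤ s := le_trans ht hs
    have h1 : ‖(NormedSpace.exp ((t - s) • A)) (Pu (g s))‖
        ≤ K * Real.exp (α * (t - s)) * ‖g s‖ := hdichU (t - s) (by linarith) (g s)
    have h2 : K * Real.exp (α * (t - s)) * ‖g s‖
        ≤ K * Real.exp (α * (t - s)) * (L' * (M * Real.exp (η * s + zI s))) :=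
      mul_le_mul_of_nonneg_left (hgnorm s hs0) (by positivity)
    rw [norm_smul, Real.norm_eq_abs, Real.abs_exp]
    calc Real.exp (zI t - zI s) * ‖(NormedSpace.exp ((t - s) • A)) (Pu (g s))‖
        ≤ Real.exp (zI t - zI s) * (K * Real.exp (α * (t - s)) *
            (L' * (M * Real.exp (η * s + zI s)))) :=
          mul_le_mul_of_nonneg_left (le_trans h1 h2) (Real.exp_pos _).le
      _ = (K * L' * M) * (Real.exp (zI t - zI s) * Real.exp (α * (t - s)) *
            Real.exp (η * s + zI s)) := by ring
      _ = (K * L' * M) * (Real.exp (zI t + α * t) * Real.exp ((η - α) * s)) := by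
          rw [← Real.exp_add, ← Real.exp_add, ← Real.exp_add]
          ring_nf
      _ = (K * L' * M * Real.exp (zI t + α * t)) * Real.exp ((η - α) * s) := by ring
  -- continuity of the integrands
  have hPcontOn : ∀ (P : EuclideanSpace ℝ (Fin n) →L[ℝ] EuclideanSpace ℝ (Fin n)),
      ContinuousOn
        (fun s => Real.exp (zI t - zI s) • (NormedSpace.exp ((t - s) • A)) (P (g s)))
        (Set.Ici 0) := by
    intro P
    refine ContinuousOn.smul
      ((Real.continuous_exp.comp (continuous_const.sub hzIcont)).continuousOn) ?_
    refine ContinuousOn.clm_apply ?_ (P.continuous.comp_continuousOn hgcont)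
    exact (NormedSpace.exp_continuous.comp
      ((continuous_const.sub continuous_id).smul continuous_const)).continuousOn
  have hmono : Set.Ioi t ⊆ Set.Ici (0:ℝ) := fun x hx => le_trans ht (le_of_lt hx)
  have hαη : (0:ℝ) < α - η := by
    have : |z 0| ≤ δ := hδ 0
    have hδ0 : (0:ℝ) ≤ δ := le_trans (abs_nonneg _) this
    linarith
  -- integrability on Ioi t
  have hHint : IntegrableOn
      (fun s => Real.exp (zI t - zI s) • (NormedSpace.exp ((t - s) • A)) (Pu (g s)))
      (Set.Ioi t) volume := by
    have hdom : IntegrableOn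
        (fun s : ℝ => (K * L' * M * Real.exp (zI t + α * t)) * Real.exp (-(α - η) * s))
        (Set.Ioi t) volume := (exp_neg_integrableOn_Ioi t hαη).const_mul _
    refine Integrable.mono' hdom
      (((hPcontOn Pu).mono hmono).aestronglyMeasurable measurableSet_Ioi) ?_
    refine (ae_restrict_iff' measurableSet_Ioi).mpr (Filter.Eventually.of_forall fun s hs => ?_)
    have h := hHnorm s (le_of_lt hs)
    have heq : (η - α) * s = -(α - η) * s := by ring
    rw [heq] at h
    exact h
  -- the boundary term tends to zero
  have hTail : Filter.Tendsto
      (fun T : ℝ => Real.exp (zI t) • Pu ((NormedSpace.exp (t • A)) (F T)))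
      Filter.atTop (nhds 0) := by
    have hbnd : ∀ᶠ T in Filter.atTop,
        ‖Real.exp (zI t) • Pu ((NormedSpace.exp (t • A)) (F T))‖
          ≤ (K * M * Real.exp (zI t + α * t)) * Real.exp ((η - α) * T) := by
      filter_upwards [Filter.eventually_ge_atTop t] with T hT
      have hT0 : (0:ℝ) ≤ T := le_trans ht hT
      have hrw : Real.exp (zI t) • Pu ((NormedSpace.exp (t • A)) (F T))
          = Real.exp (zI t - zI T) • (NormedSpace.exp ((t - T) • A)) (Pu (ψ T)) := by
        simp only [hFdef]
        rw [_root_.map_smul, _root_.map_smul, smul_smul, ← Real.exp_add,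
          show zI t + -zI T = zI t - zI T from by ring]
        congr 1
        rw [hcomm' (t - T) (ψ T)]
        congr 1
        rw [show NormedSpace.exp (t • A) ((NormedSpace.exp ((-T) • A)) (ψ T))
            = (NormedSpace.exp (t • A) * NormedSpace.exp ((-T) • A)) (ψ T) from rfl,
          hgrp, show t + -T = t - T from by ring]
      rw [hrw, norm_smul, Real.norm_eq_abs, Real.abs_exp]
      have h1 : ‖(NormedSpace.exp ((t - T) • A)) (Pu (ψ T))‖
          ≤ K * Real.exp (α * (t - T)) * ‖ψ T‖ := hdichU (t - T) (by linarith) (ψ T)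
      have h2 : K * Real.exp (α * (t - T)) * ‖ψ T‖
          ≤ K * Real.exp (α * (t - T)) * (M * Real.exp (η * T + zI T)) :=
        mul_le_mul_of_nonneg_left (hψnorm T hT0) (by positivity)
      calc Real.exp (zI t - zI T) * ‖(NormedSpace.exp ((t - T) • A)) (Pu (ψ T))‖
          ≤ Real.exp (zI t - zI T) * (K * Real.exp (α * (t - T)) *
              (M * Real.exp (η * T + zI T))) :=
            mul_le_mul_of_nonneg_left (le_trans h1 h2) (Real.exp_pos _).le
        _ = (K * M) * (Real.exp (zI t - zI T) * Real.exp (α * (t - T)) *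
              Real.exp (η * T + zI T)) := by ring
        _ = (K * M) * (Real.exp (zI t + α * t) * Real.exp ((η - α) * T)) := by
            rw [← Real.exp_add, ← Real.exp_add, ← Real.exp_add]
            ring_nf
        _ = (K * M * Real.exp (zI t + α * t)) * Real.exp ((η - α) * T) := by ring
    have hlim0 : Filter.Tendsto (fun T : ℝ => Real.exp ((η - α) * T))
        Filter.atTop (nhds 0) := by
      have h1 : Filter.Tendsto (fun T : ℝ => (α - η) * T) Filter.atTop Filter.atTop :=
        Filter.Tendsto.const_mul_atTop hαη Filter.tendsto_id
      have h2 := Real.tendsto_exp_neg_atTop_nhds_zero.comp h1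
      refine h2.congr fun T => ?_
      simp only [Function.comp]
      congr 1
      ring
    have hlim : Filter.Tendsto
        (fun T : ℝ => (K * M * Real.exp (zI t + α * t)) * Real.exp ((η - α) * T))
        Filter.atTop (nhds 0) := by
      have := hlim0.const_mul (K * M * Real.exp (zI t + α * t))
      simpa using this
    exact squeeze_zero_norm' hbnd hlim
  -- take the limit in the finite-time identity
  have hIoiLim : Filter.Tendsto
      (fun T : ℝ => ∫ s in t..T, Real.exp (zI t - zI s) •
        (NormedSpace.exp ((t - s) • A)) (Pu (g s)))
      Filter.atTop
      (nhds (∫ s in Set.Ioi t, Real.exp (zI t - zI s) •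
        (NormedSpace.exp ((t - s) • A)) (Pu (g s)))) :=
    intervalIntegral_tendsto_integral_Ioi t hHint Filter.tendsto_id
  have hPuψ : Pu (ψ t) = -∫ s in Set.Ioi t, Real.exp (zI t - zI s) •
      (NormedSpace.exp ((t - s) • A)) (Pu (g s)) := by
    have hlim := hTail.sub hIoiLim
    have heq : (fun T : ℝ => Real.exp (zI t) • Pu ((NormedSpace.exp (t • A)) (F T))
        - ∫ s in t..T, Real.exp (zI t - zI s) •
            (NormedSpace.exp ((t - s) • A)) (Pu (g s)))
        =ᶠ[Filter.atTop] (fun _ : ℝ => Pu (ψ t)) := by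
      filter_upwards [Filter.eventually_ge_atTop t] with T hT
      exact (hunstT T hT).symm
    have h3 : Filter.Tendsto (fun _ : ℝ => Pu (ψ t)) Filter.atTop
        (nhds (0 - ∫ s in Set.Ioi t, Real.exp (zI t - zI s) •
          (NormedSpace.exp ((t - s) • A)) (Pu (g s)))) := by
      exact Filter.Tendsto.congr' heq hlim
    have h4 := tendsto_nhds_unique h3 tendsto_const_nhds
    rw [zero_sub] at h4
    exact h4.symm
  -- assemble everything
  refine ⟨?_, ?_, ?_⟩
  · simp only [hsplit]
    have hsub : Set.uIcc (0:ℝ) t ⊆ Set.Ici 0 := by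
      rw [Set.uIcc_of_le ht]
      exact fun x hx => hx.1
    exact ((hPcontOn Ps).mono hsub).intervalIntegrable
  · simp only [hsplit]
    exact hHint
  · simp only [hsplit]
    have hgs : ∀ s, G s (ψ s + Φ s) - G s (Φ s) = g s := fun s => rfl
    have h10 : zI 0 = 0 := intervalIntegral.integral_same
    simp only [hgs, h10, sub_zero]
    rw [show ψ t = Ps (ψ t) + Pu (ψ t) from (hid (ψ t)).symm, hstable, hPuψ]
    rw [sub_eq_add_neg]
end

section
/- Let Z : [0,∞) → ℝ be continuous and bounded and let ε ≥ 0 satisfy ε·sup_t |Z(t)| < 1. For initial data p = (x₀,y₀) and p̃ = (x̃₀,ỹ₀), let (x(t),y(t)) and (x̃(t),ỹ(t)) be the solutions on [0,∞) of the system ẋ = −x + εZ(t)x, ẏ = y + εZ(t)y + e^{εZ(t)} x² with these initial data. Set K := ∫₀^∞ e^{−3s + ε∫₀ˢ Z(r)dr + εZ(s)} ds (which converges). Then (x̃(t) − x(t), ỹ(t) − y(t)) → 0 as t → ∞ if and only if ỹ₀ − y₀ = −(x̃₀² − x₀²) K; moreover in that case the difference decays exponentially. -/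
open Filter MeasureTheory

private lemma primitive_hasDerivWithinAt {f : ℝ → ℝ}
    (hf : ContinuousOn f (Set.Ici 0)) {t : ℝ} (ht : (0:ℝ) ≤ t) :
    HasDerivWithinAt (fun u => ∫ r in (0:ℝ)..u, f r) (f t) (Set.Ici (0:ℝ)) t := by
  have hint : IntervalIntegrable f MeasureTheory.volume 0 t :=
    (hf.mono (by rw [Set.uIcc_of_le ht]; exact Set.Icc_subset_Ici_self)).intervalIntegrable
  rcases eq_or_lt_of_le ht with h0 | h0
  · subst h0
    exact intervalIntegral.integral_hasDerivWithinAt_right hint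
      ⟨Set.Ici 0, Filter.mem_of_superset self_mem_nhdsWithin Set.Ioi_subset_Ici_self,
        hf.aestronglyMeasurable measurableSet_Ici⟩
      ((hf 0 Set.self_mem_Ici).mono Set.Ioi_subset_Ici_self)
  · have ht' : Set.Ici (0:ℝ) ∈ nhds t := Ici_mem_nhds h0
    exact (intervalIntegral.integral_hasDerivAt_right hint
      ⟨Set.Ici 0, ht', hf.aestronglyMeasurable measurableSet_Ici⟩
      (hf.continuousAt ht')).hasDerivWithinAt

private lemma const_of_derivWithin_zero {φ : ℝ → ℝ}
    (h : ∀ t ∈ Set.Ici (0:ℝ), HasDerivWithinAt φ 0 (Set.Ici (0:ℝ)) t) :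
    ∀ t ∈ Set.Ici (0:ℝ), φ t = φ 0 := by
  intro t ht
  have hcont : ContinuousOn φ (Set.Icc 0 t) :=
    fun s hs => ((h s hs.1).continuousWithinAt).mono Set.Icc_subset_Ici_self
  exact constant_of_has_deriv_right_zero hcont
    (fun s hs => (h s hs.1).mono (Set.Ici_subset_Ici.2 hs.1)) t ⟨ht, le_rfl⟩

private lemma exp_integral_Ioi {b : ℝ} (hb : 0 < b) (t : ℝ) :
    ∫ s in Set.Ioi t, Real.exp (-b * s) = Real.exp (-b * t) / b := by
  have h := MeasureTheory.integral_Ioi_of_hasDerivAt_of_tendsto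
    (f := fun s : ℝ => -Real.exp (-b * s) / b) (f' := fun s : ℝ => Real.exp (-b * s))
    (a := t) (m := 0) (Continuous.continuousWithinAt (by continuity)) ?_ (exp_neg_integrableOn_Ioi t hb) ?_
  · rw [h]; ring
  · intro s _
    have h1 : HasDerivAt (fun s : ℝ => -b * s) (-b) s := by
      simpa using (hasDerivAt_id s).const_mul (-b)
    have h2 := (h1.exp.neg.div_const b)
    refine h2.congr_deriv ?_
    field_simp
  · have : Tendsto (fun s : ℝ => -b * s) atTop atBot := by
      apply Tendsto.const_mul_atTop_of_neg (by linarith) tendsto_id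
    have h3 := Real.tendsto_exp_atBot.comp this
    have := (h3.neg.div_const b)
    simpa using this

private lemma linear_solution {Z : ℝ → ℝ} (hZcont : ContinuousOn Z (Set.Ici 0))
    {ε : ℝ} (u : ℝ → ℝ)
    (hu : ∀ t ∈ Set.Ici (0:ℝ), HasDerivWithinAt u (-(u t) + ε * Z t * u t) (Set.Ici 0) t)
    {t : ℝ} (ht : 0 ≤ t) :
    u t = u 0 * Real.exp (-t + ε * ∫ r in (0:ℝ)..t, Z r) := by
  set I : ℝ → ℝ := fun s => ∫ r in (0:ℝ)..s, Z r with hI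
  have hφ : ∀ s ∈ Set.Ici (0:ℝ),
      HasDerivWithinAt (fun s => u s * Real.exp (s - ε * I s)) 0 (Set.Ici 0) s := by
    intro s hs
    have h1 : HasDerivWithinAt (fun s => s - ε * I s) (1 - ε * Z s) (Set.Ici 0) s :=
      (hasDerivWithinAt_id s _).sub ((primitive_hasDerivWithinAt hZcont hs).const_mul ε)
    have h3 := (hu s hs).mul h1.exp
    refine h3.congr_deriv ?_
    ring
  have hc := const_of_derivWithin_zero hφ t ht
  simp only [intervalIntegral.integral_same, hI] at hc
  have h0 : u 0 * Real.exp ((0:ℝ) - ε * 0) = u 0 := by norm_num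
  rw [h0] at hc
  calc u t = u t * (Real.exp (t - ε * I t) * Real.exp (-(t - ε * I t))) := by
        rw [← Real.exp_add, add_neg_cancel, Real.exp_zero, mul_one]
    _ = (u t * Real.exp (t - ε * I t)) * Real.exp (-(t - ε * I t)) := by ring
    _ = u 0 * Real.exp (-(t - ε * I t)) := by rw [hc]
    _ = u 0 * Real.exp (-t + ε * I t) := by congr 1; ring

private lemma affine_solution {Z : ℝ → ℝ} (hZcont : ContinuousOn Z (Set.Ici 0))
    {ε : ℝ} (v : ℝ → ℝ) (q : ℝ → ℝ) (hq : ContinuousOn q (Set.Ici 0))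
    (hv : ∀ t ∈ Set.Ici (0:ℝ), HasDerivWithinAt v (v t + ε * Z t * v t + q t) (Set.Ici 0) t)
    {t : ℝ} (ht : 0 ≤ t) :
    v t = (v 0 + ∫ s in (0:ℝ)..t, q s * Real.exp (-s - ε * ∫ r in (0:ℝ)..s, Z r))
        * Real.exp (t + ε * ∫ r in (0:ℝ)..t, Z r) := by
  set I : ℝ → ℝ := fun s => ∫ r in (0:ℝ)..s, Z r with hI
  have hIcont : ContinuousOn I (Set.Ici 0) :=
    fun s hs => (primitive_hasDerivWithinAt hZcont hs).continuousWithinAt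
  have hfcont : ContinuousOn (fun s => q s * Real.exp (-s - ε * I s)) (Set.Ici 0) := by
    apply hq.mul
    apply Real.continuous_exp.comp_continuousOn
    exact ((continuousOn_id (s := Set.Ici (0:ℝ))).neg).sub (continuousOn_const.mul hIcont)
  have hφ : ∀ s ∈ Set.Ici (0:ℝ),
      HasDerivWithinAt (fun s => v s * Real.exp (-s - ε * I s)
        - ∫ r in (0:ℝ)..s, q r * Real.exp (-r - ε * I r)) 0 (Set.Ici 0) s := by
    intro s hs
    have h1 : HasDerivWithinAt (fun s => -s - ε * I s) (-1 - ε * Z s) (Set.Ici 0) s :=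
      ((hasDerivWithinAt_id s _).neg).sub ((primitive_hasDerivWithinAt hZcont hs).const_mul ε)
    have h3 := ((hv s hs).mul h1.exp).sub (primitive_hasDerivWithinAt hfcont hs)
    refine h3.congr_deriv ?_
    ring
  have hc := const_of_derivWithin_zero hφ t ht
  simp only [intervalIntegral.integral_same, hI] at hc
  have h0 : v 0 * Real.exp (-(0:ℝ) - ε * 0) - 0 = v 0 := by norm_num
  rw [h0] at hc
  have hc' : v t * Real.exp (-t - ε * I t) = v 0 + ∫ r in (0:ℝ)..t, q r * Real.exp (-r - ε * I r) := by
    linarith [hc]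
  calc v t = v t * (Real.exp (-t - ε * I t) * Real.exp (t + ε * I t)) := by
        rw [← Real.exp_add]; norm_num
    _ = (v t * Real.exp (-t - ε * I t)) * Real.exp (t + ε * I t) := by ring
    _ = _ := by rw [hc']

/-- Stable leaf of the random planar system `ẋ = -x + εZ(t)x`,
`ẏ = y + εZ(t)y + e^{εZ(t)}x²`: two orbits converge to each other iff the
initial data satisfy `ỹ₀ - y₀ = -(x̃₀² - x₀²)K`, in which case the difference
decays exponentially. -/
theorem random_planar_stable_leaf
    (Z : ℝ → ℝ) (hZcont : ContinuousOn Z (Set.Ici 0))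
    (M : ℝ) (hZbdd : ∀ t : ℝ, |Z t| ≤ M)
    (ε : ℝ) (hε : 0 ≤ ε) (hεM : ε * M < 1)
    (x₀ y₀ xt₀ yt₀ : ℝ)
    (x y xt yt : ℝ → ℝ)
    (hx : ∀ t ∈ Set.Ici (0:ℝ),
      HasDerivWithinAt x (-(x t) + ε * Z t * x t) (Set.Ici 0) t)
    (hy : ∀ t ∈ Set.Ici (0:ℝ),
      HasDerivWithinAt y (y t + ε * Z t * y t + Real.exp (ε * Z t) * (x t) ^ 2)
        (Set.Ici 0) t)
    (hxt : ∀ t ∈ Set.Ici (0:ℝ),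
      HasDerivWithinAt xt (-(xt t) + ε * Z t * xt t) (Set.Ici 0) t)
    (hyt : ∀ t ∈ Set.Ici (0:ℝ),
      HasDerivWithinAt yt (yt t + ε * Z t * yt t + Real.exp (ε * Z t) * (xt t) ^ 2)
        (Set.Ici 0) t)
    (hx0 : x 0 = x₀) (hy0 : y 0 = y₀) (hxt0 : xt 0 = xt₀) (hyt0 : yt 0 = yt₀)
    (K : ℝ)
    (hK : K = ∫ s in Set.Ioi (0:ℝ),
      Real.exp (-3 * s + ε * (∫ r in (0:ℝ)..s, Z r) + ε * Z s)) :
    IntegrableOn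
      (fun s => Real.exp (-3 * s + ε * (∫ r in (0:ℝ)..s, Z r) + ε * Z s))
      (Set.Ioi (0:ℝ))
    ∧ (Tendsto (fun t => (xt t - x t, yt t - y t)) atTop (nhds (0, 0))
        ↔ yt₀ - y₀ = -(xt₀ ^ 2 - x₀ ^ 2) * K)
    ∧ (yt₀ - y₀ = -(xt₀ ^ 2 - x₀ ^ 2) * K →
        ∃ C c : ℝ, 0 < c ∧ ∀ t ≥ (0:ℝ),
          ‖(xt t - x t, yt t - y t)‖ ≤ C * Real.exp (-c * t)) := by
  have hM0 : 0 ≤ M := (abs_nonneg _).trans (hZbdd 0)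
  have hεM0 : 0 ≤ ε * M := mul_nonneg hε hM0
  set I : ℝ → ℝ := fun s => ∫ r in (0:ℝ)..s, Z r with hIdef
  set g : ℝ → ℝ := fun s => Real.exp (-3 * s + ε * I s + ε * Z s) with hgdef
  have hIcont : ContinuousOn I (Set.Ici 0) :=
    fun s hs => (primitive_hasDerivWithinAt hZcont hs).continuousWithinAt
  have hIbound : ∀ t, 0 ≤ t → |I t| ≤ M * t := by
    intro t ht
    have := intervalIntegral.norm_integral_le_of_norm_le_const
      (C := M) (f := Z) (a := (0:ℝ)) (b := t) (fun s _ => by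
        rw [Real.norm_eq_abs]; exact hZbdd s)
    rw [Real.norm_eq_abs] at this
    simpa [abs_of_nonneg ht] using this
  have hgcont : ContinuousOn g (Set.Ici 0) := by
    apply Real.continuous_exp.comp_continuousOn
    exact ((continuousOn_const.mul (continuousOn_id (s := Set.Ici (0:ℝ)))).add
      (continuousOn_const.mul hIcont)).add (continuousOn_const.mul hZcont)
  have hgpos : ∀ s, 0 < g s := fun s => Real.exp_pos _
  have hb : 0 < 3 - ε * M := by linarith
  have hgbound : ∀ s, 0 ≤ s → g s ≤ Real.exp (ε * M) * Real.exp (-(3 - ε * M) * s) := by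
    intro s hs
    rw [← Real.exp_add]
    apply Real.exp_le_exp.2
    have h1 : ε * I s ≤ ε * M * s := by
      have := (abs_le.1 (hIbound s hs)).2
      nlinarith
    have h2 : ε * Z s ≤ ε * M := by
      have := (abs_le.1 (hZbdd s)).2
      nlinarith
    nlinarith
  -- integrability
  have hbint : ∀ t : ℝ, IntegrableOn
      (fun s => Real.exp (ε * M) * Real.exp (-(3 - ε * M) * s)) (Set.Ioi t) :=
    fun t => (exp_neg_integrableOn_Ioi t hb).const_mul _
  have hgm : ∀ t : ℝ, 0 ≤ t → AEStronglyMeasurable g (volume.restrict (Set.Ioi t)) := by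
    intro t ht
    exact (hgcont.mono (fun s hs => le_trans ht (le_of_lt hs))).aestronglyMeasurable
      measurableSet_Ioi
  have hgint : ∀ t : ℝ, 0 ≤ t → IntegrableOn g (Set.Ioi t) := by
    intro t ht
    apply (hbint t).mono' (hgm t ht)
    rw [MeasureTheory.ae_restrict_iff' measurableSet_Ioi]
    apply Filter.Eventually.of_forall
    intro s hs
    rw [Real.norm_eq_abs, abs_of_pos (hgpos s)]
    exact hgbound s (le_trans ht (le_of_lt hs))
  refine ⟨hgint 0 le_rfl, ?_⟩
  -- tail bound
  have htail : ∀ t, 0 ≤ t → (∫ s in Set.Ioi t, g s)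
      ≤ Real.exp (ε * M) / (3 - ε * M) * Real.exp (-(3 - ε * M) * t) := by
    intro t ht
    have h1 : (∫ s in Set.Ioi t, g s)
        ≤ ∫ s in Set.Ioi t, Real.exp (ε * M) * Real.exp (-(3 - ε * M) * s) := by
      apply setIntegral_mono_on (hgint t ht) (hbint t) measurableSet_Ioi
      intro s hs
      exact hgbound s (le_trans ht (le_of_lt hs))
    rw [MeasureTheory.integral_const_mul, exp_integral_Ioi hb t] at h1
    calc (∫ s in Set.Ioi t, g s)
        ≤ Real.exp (ε * M) * (Real.exp (-(3 - ε * M) * t) / (3 - ε * M)) := h1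
      _ = Real.exp (ε * M) / (3 - ε * M) * Real.exp (-(3 - ε * M) * t) := by ring
  have htail0 : ∀ t, 0 ≤ t → 0 ≤ ∫ s in Set.Ioi t, g s := by
    intro t ht
    apply setIntegral_nonneg measurableSet_Ioi
    exact fun s _ => (hgpos s).le
  -- splitting K
  have hsplit : ∀ t, 0 ≤ t → K = (∫ s in (0:ℝ)..t, g s) + ∫ s in Set.Ioi t, g s := by
    intro t ht
    rw [hK]
    show (∫ s in Set.Ioi (0:ℝ), g s) = _
    rw [← Set.Ioc_union_Ioi_eq_Ioi ht,
      MeasureTheory.setIntegral_union (Set.Ioc_disjoint_Ioi le_rfl) measurableSet_Ioi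
        ((hgint 0 le_rfl).mono_set Set.Ioc_subset_Ioi_self)
        ((hgint 0 le_rfl).mono_set (Set.Ioi_subset_Ioi ht)),
      intervalIntegral.integral_of_le ht]
  -- solution formulas
  have hxsol : ∀ t, 0 ≤ t → x t = x₀ * Real.exp (-t + ε * I t) := by
    intro t ht; rw [← hx0]; exact linear_solution hZcont x hx ht
  have hxtsol : ∀ t, 0 ≤ t → xt t = xt₀ * Real.exp (-t + ε * I t) := by
    intro t ht; rw [← hxt0]; exact linear_solution hZcont xt hxt ht
  have hxcont : ContinuousOn x (Set.Ici 0) := fun s hs => (hx s hs).continuousWithinAt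
  have hxtcont : ContinuousOn xt (Set.Ici 0) := fun s hs => (hxt s hs).continuousWithinAt
  have hqcont : ContinuousOn (fun s => Real.exp (ε * Z s) * (x s) ^ 2) (Set.Ici 0) :=
    (Real.continuous_exp.comp_continuousOn (continuousOn_const.mul hZcont)).mul
      (hxcont.pow 2)
  have hqtcont : ContinuousOn (fun s => Real.exp (ε * Z s) * (xt s) ^ 2) (Set.Ici 0) :=
    (Real.continuous_exp.comp_continuousOn (continuousOn_const.mul hZcont)).mul
      (hxtcont.pow 2)
  have key : ∀ (u : ℝ → ℝ) (u₀ : ℝ), (∀ t, 0 ≤ t → u t = u₀ * Real.exp (-t + ε * I t)) →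
      ∀ t, 0 ≤ t → (∫ s in (0:ℝ)..t,
        Real.exp (ε * Z s) * (u s) ^ 2 * Real.exp (-s - ε * I s))
      = u₀ ^ 2 * ∫ s in (0:ℝ)..t, g s := by
    intro u u₀ husol t ht
    rw [← intervalIntegral.integral_const_mul]
    apply intervalIntegral.integral_congr
    intro s hs
    rw [Set.uIcc_of_le ht] at hs
    show Real.exp (ε * Z s) * u s ^ 2 * Real.exp (-s - ε * I s) = u₀ ^ 2 * g s
    rw [husol s hs.1]
    calc Real.exp (ε * Z s) * (u₀ * Real.exp (-s + ε * I s)) ^ 2 * Real.exp (-s - ε * I s)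
        = u₀ ^ 2 * (Real.exp (ε * Z s) * Real.exp (-s + ε * I s) * Real.exp (-s + ε * I s)
            * Real.exp (-s - ε * I s)) := by ring
      _ = u₀ ^ 2 * g s := by
          simp only [hgdef, ← Real.exp_add]
          congr 1
          apply congrArg
          ring
  have hysol : ∀ t, 0 ≤ t →
      y t = (y₀ + x₀ ^ 2 * ∫ s in (0:ℝ)..t, g s) * Real.exp (t + ε * I t) := by
    intro t ht
    have := affine_solution hZcont y _ hqcont hy ht
    rw [hy0] at this
    rw [this, key x x₀ hxsol t ht]
  have hytsol : ∀ t, 0 ≤ t →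
      yt t = (yt₀ + xt₀ ^ 2 * ∫ s in (0:ℝ)..t, g s) * Real.exp (t + ε * I t) := by
    intro t ht
    have := affine_solution hZcont yt _ hqtcont hyt ht
    rw [hyt0] at this
    rw [this, key xt xt₀ hxtsol t ht]
  set D : ℝ := yt₀ - y₀ with hD
  set B : ℝ := xt₀ ^ 2 - x₀ ^ 2 with hB
  have hdx : ∀ t, 0 ≤ t → xt t - x t = (xt₀ - x₀) * Real.exp (-t + ε * I t) := by
    intro t ht; rw [hxsol t ht, hxtsol t ht]; ring
  have hdy : ∀ t, 0 ≤ t →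
      yt t - y t = (D + B * ∫ s in (0:ℝ)..t, g s) * Real.exp (t + ε * I t) := by
    intro t ht; rw [hysol t ht, hytsol t ht, hD, hB]; ring
  set c : ℝ := 1 - ε * M with hc
  have hc0 : 0 < c := by rw [hc]; linarith
  -- exponent bounds
  have hexp1 : ∀ t, 0 ≤ t → Real.exp (-t + ε * I t) ≤ Real.exp (-c * t) := by
    intro t ht
    apply Real.exp_le_exp.2
    have := (abs_le.1 (hIbound t ht)).2
    rw [hc]; nlinarith
  have hexp2 : ∀ t, 0 ≤ t → Real.exp (t + ε * I t) ≤ Real.exp ((1 + ε * M) * t) := by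
    intro t ht
    apply Real.exp_le_exp.2
    have := (abs_le.1 (hIbound t ht)).2
    nlinarith
  have hexp3 : ∀ t, 0 ≤ t → Real.exp (c * t) ≤ Real.exp (t + ε * I t) := by
    intro t ht
    apply Real.exp_le_exp.2
    have := (abs_le.1 (hIbound t ht)).1
    rw [hc]; nlinarith
  -- the decay statement (part 3), proved first
  have part3 : D = -B * K →
      ∃ C c' : ℝ, 0 < c' ∧ ∀ t ≥ (0:ℝ),
        ‖(xt t - x t, yt t - y t)‖ ≤ C * Real.exp (-c' * t) := by
    intro hDB
    set C₂ : ℝ := |B| * (Real.exp (ε * M) / (3 - ε * M)) with hC₂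
    refine ⟨|xt₀ - x₀| + C₂, c, hc0, ?_⟩
    intro t ht
    have hb1 : |xt t - x t| ≤ |xt₀ - x₀| * Real.exp (-c * t) := by
      rw [hdx t ht, abs_mul, abs_of_pos (Real.exp_pos _)]
      exact mul_le_mul_of_nonneg_left (hexp1 t ht) (abs_nonneg _)
    have hGT : D + B * ∫ s in (0:ℝ)..t, g s = -(B * ∫ s in Set.Ioi t, g s) := by
      rw [hDB, hsplit t ht]; ring
    have hb2 : |yt t - y t| ≤ C₂ * Real.exp (-c * t) := by
      rw [hdy t ht, abs_mul, hGT, abs_neg, abs_mul, abs_of_pos (Real.exp_pos _),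
        abs_of_nonneg (htail0 t ht)]
      calc |B| * (∫ s in Set.Ioi t, g s) * Real.exp (t + ε * I t)
          ≤ |B| * (Real.exp (ε * M) / (3 - ε * M) * Real.exp (-(3 - ε * M) * t))
            * Real.exp ((1 + ε * M) * t) := by
            apply mul_le_mul
            · exact mul_le_mul_of_nonneg_left (htail t ht) (abs_nonneg _)
            · exact hexp2 t ht
            · exact (Real.exp_pos _).le
            · positivity
        _ = C₂ * Real.exp (-(3 - ε * M) * t + (1 + ε * M) * t) := by
            rw [Real.exp_add, hC₂]; ring
        _ ≤ C₂ * Real.exp (-c * t) := by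
            apply mul_le_mul_of_nonneg_left _ (by positivity)
            apply Real.exp_le_exp.2
            rw [hc]; nlinarith
    have hnorm : ‖(xt t - x t, yt t - y t)‖ = max |xt t - x t| |yt t - y t| := rfl
    rw [hnorm]
    apply max_le
    · calc |xt t - x t| ≤ |xt₀ - x₀| * Real.exp (-c * t) := hb1
        _ ≤ (|xt₀ - x₀| + C₂) * Real.exp (-c * t) := by
            apply mul_le_mul_of_nonneg_right _ (Real.exp_pos _).le
            have : 0 ≤ C₂ := by positivity
            linarith
    · calc |yt t - y t| ≤ C₂ * Real.exp (-c * t) := hb2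
        _ ≤ (|xt₀ - x₀| + C₂) * Real.exp (-c * t) := by
            apply mul_le_mul_of_nonneg_right _ (Real.exp_pos _).le
            have : 0 ≤ |xt₀ - x₀| := abs_nonneg _
            linarith
  have hGK : Tendsto (fun t => ∫ s in (0:ℝ)..t, g s) atTop (nhds K) := by
    rw [hK]
    exact intervalIntegral_tendsto_integral_Ioi 0 (hgint 0 le_rfl) tendsto_id
  constructor
  · constructor
    · -- forward
      intro h
      have h2 : Tendsto (fun t => yt t - y t) atTop (nhds 0) := by
        have := (continuous_snd.tendsto ((0:ℝ), (0:ℝ))).comp h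
        simpa [Function.comp_def] using this
      by_contra hne
      have hA : D + B * K ≠ 0 := by
        intro h0
        apply hne
        linarith
      set A : ℝ := D + B * K with hA'
      have h3 : Tendsto (fun t => D + B * ∫ s in (0:ℝ)..t, g s) atTop (nhds A) :=
        tendsto_const_nhds.add (hGK.const_mul B)
      have hev1 : ∀ᶠ t in atTop, |A| / 2 ≤ |D + B * ∫ s in (0:ℝ)..t, g s| := by
        have := h3 (Metric.ball_mem_nhds A (by positivity : (0:ℝ) < |A| / 2))
        filter_upwards [this] with t htb
        rw [Set.mem_preimage, Metric.mem_ball, Real.dist_eq] at htb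
        have := abs_sub_abs_le_abs_sub A (D + B * ∫ s in (0:ℝ)..t, g s)
        rw [abs_sub_comm] at this
        linarith
      have hev2 : ∀ᶠ t in atTop, |yt t - y t| < |A| / 2 := by
        have := h2 (Metric.ball_mem_nhds 0 (by positivity : (0:ℝ) < |A| / 2))
        filter_upwards [this] with t htb
        rw [Set.mem_preimage, Metric.mem_ball, Real.dist_eq, sub_zero] at htb
        exact htb
      have hev3 : ∀ᶠ t : ℝ in atTop, (0:ℝ) ≤ t := eventually_ge_atTop 0
      obtain ⟨t, h1t, h2t, h3t⟩ := (hev1.and (hev2.and hev3)).exists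
      have : |A| / 2 ≤ |yt t - y t| := by
        rw [hdy t h3t, abs_mul, abs_of_pos (Real.exp_pos _)]
        have he : (1:ℝ) ≤ Real.exp (t + ε * I t) := by
          calc (1:ℝ) = Real.exp 0 := Real.exp_zero.symm
            _ ≤ Real.exp (c * t) := Real.exp_le_exp.2 (by positivity)
            _ ≤ _ := hexp3 t h3t
        calc |A| / 2 = |A| / 2 * 1 := (mul_one _).symm
          _ ≤ |D + B * ∫ s in (0:ℝ)..t, g s| * Real.exp (t + ε * I t) :=
              mul_le_mul h1t he zero_le_one (abs_nonneg _)
      linarith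
    · -- backward
      intro hleaf
      obtain ⟨C, c', hc', hbd⟩ := part3 hleaf
      have hg0 : Tendsto (fun t : ℝ => C * Real.exp (-c' * t)) atTop (nhds 0) := by
        have h1 : Tendsto (fun t : ℝ => -c' * t) atTop atBot :=
          Tendsto.const_mul_atTop_of_neg (by linarith) tendsto_id
        have := (Real.tendsto_exp_atBot.comp h1).const_mul C
        simpa using this
      have := squeeze_zero_norm' (f := fun t => ((xt t - x t, yt t - y t) : ℝ × ℝ))
        (a := fun t => C * Real.exp (-c' * t)) ?_ hg0
      · simpa [Prod.mk_zero_zero] using this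
      · filter_upwards [eventually_ge_atTop (0:ℝ)] with t ht
        exact hbd t ht
  · intro hleaf
    exact part3 hleaf
end
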